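/- arXiv:1810.09669 — 8 statements merged into one kernel-verified Lean document; each statement's English description precedes it below -/
import Mathlib

section
/- Let Ω be a field, K a subfield of Ω, and let M ⊆ Ω and L ⊆ Ω be (possibly infinite) Galois extensions of K such that Gal(M/K) is abelian. Then every element of Gal(ML/L) lies in the center of Gal(ML/K), where ML denotes the compositum of M and L inside Ω. -/
/-- Let `Ω` be a field, `K` a subfield of `Ω`, and let `M ⊆ Ω` and `L ⊆ Ω` be (possibly infinite)
Galois extensions of `K` such that `Gal(M/K)` is abelian.  Then every element of `Gal(ML/L)`
lies in the center of `Gal(ML/K)`, where `ML` denotes the compositum of `M` and `L` inside `Ω`.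

Here `Gal(ML/L)` is realized as the set of `K`-automorphisms of `M ⊔ L` fixing `L` pointwise. -/
theorem statement2 (K Ω : Type*) [Field K] [Field Ω] [Algebra K Ω]
    (M L : IntermediateField K Ω) [IsGalois K M] [IsGalois K L]
    (habelian : ∀ σ τ : (↥M ≃ₐ[K] ↥M), σ * τ = τ * σ)
    (σ : ↥(M ⊔ L) ≃ₐ[K] ↥(M ⊔ L))
    (hσ : ∀ (x : Ω) (hx : x ∈ L), σ ⟨x, (le_sup_right : L ≤ M ⊔ L) hx⟩ =
      ⟨x, (le_sup_right : L ≤ M ⊔ L) hx⟩) :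
    ∀ τ : ↥(M ⊔ L) ≃ₐ[K] ↥(M ⊔ L), σ * τ = τ * σ := by
  have hM : M ≤ M ⊔ L := le_sup_left
  have hL : L ≤ M ⊔ L := le_sup_right
  -- restriction to M, using normality of M/K
  let f : (↥(M ⊔ L) ≃ₐ[K] ↥(M ⊔ L)) → (↥M →ₐ[K] Ω) := fun ρ =>
    ((M ⊔ L).val.comp ρ.toAlgHom).comp (IntermediateField.inclusion hM)
  let r : (↥(M ⊔ L) ≃ₐ[K] ↥(M ⊔ L)) → (↥M ≃ₐ[K] ↥M) := fun ρ =>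
    (f ρ).restrictNormal' ↥M
  have hr : ∀ (ρ : ↥(M ⊔ L) ≃ₐ[K] ↥(M ⊔ L)) (x : ↥M),
      ((ρ (IntermediateField.inclusion hM x) : ↥(M ⊔ L)) : Ω) = ↑(r ρ x) := by
    intro ρ x
    have h := AlgHom.restrictNormal_commutes (f ρ) ↥M x
    simp only [IntermediateField.algebraMap_apply, f] at h
    simpa [r, AlgHom.restrictNormal', f] using h.symm
  -- restriction to L, using normality of L/K
  let g : (↥(M ⊔ L) ≃ₐ[K] ↥(M ⊔ L)) → (↥L →ₐ[K] Ω) := fun ρ =>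
    ((M ⊔ L).val.comp ρ.toAlgHom).comp (IntermediateField.inclusion hL)
  let rL : (↥(M ⊔ L) ≃ₐ[K] ↥(M ⊔ L)) → (↥L ≃ₐ[K] ↥L) := fun ρ =>
    (g ρ).restrictNormal' ↥L
  have hrL : ∀ (ρ : ↥(M ⊔ L) ≃ₐ[K] ↥(M ⊔ L)) (x : ↥L),
      ((ρ (IntermediateField.inclusion hL x) : ↥(M ⊔ L)) : Ω) = ↑(rL ρ x) := by
    intro ρ x
    have h := AlgHom.restrictNormal_commutes (g ρ) ↥L x
    simp only [IntermediateField.algebraMap_apply, g] at h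
    simpa [rL, AlgHom.restrictNormal', g] using h.symm
  -- commutation of restrictions to M
  have comm : ∀ τ : ↥(M ⊔ L) ≃ₐ[K] ↥(M ⊔ L), ∀ x : ↥M,
      r σ (r τ x) = r τ (r σ x) := by
    intro τ x
    have h := AlgEquiv.ext_iff.mp (habelian (r σ) (r τ)) x
    simpa [AlgEquiv.mul_apply] using h
  intro τ
  have key : ((M ⊔ L).val.comp (σ * τ).toAlgHom) = ((M ⊔ L).val.comp (τ * σ).toAlgHom) := by
    apply IntermediateField.algHom_ext_of_eq_adjoin K (IntermediateField.sup_def M L)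
    intro x hx
    rcases hx with hx | hx
    · -- x ∈ M
      have hx' : x ∈ M := hx
      have e1 : (⟨x, (IntermediateField.sup_def M L).ge
            (IntermediateField.subset_adjoin _ _ (Or.inl hx))⟩ : ↥(M ⊔ L))
          = IntermediateField.inclusion hM ⟨x, hx'⟩ := rfl
      have step : ∀ ρ₁ ρ₂ : ↥(M ⊔ L) ≃ₐ[K] ↥(M ⊔ L),
          ((ρ₁ (ρ₂ (IntermediateField.inclusion hM ⟨x, hx'⟩)) : ↥(M ⊔ L)) : Ω)
            = ↑(r ρ₁ (r ρ₂ ⟨x, hx'⟩)) := by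
        intro ρ₁ ρ₂
        have h2 : ρ₂ (IntermediateField.inclusion hM ⟨x, hx'⟩)
            = IntermediateField.inclusion hM (r ρ₂ ⟨x, hx'⟩) := Subtype.ext (hr ρ₂ ⟨x, hx'⟩)
        rw [h2]
        exact hr ρ₁ _
      show (((σ * τ) _ : ↥(M ⊔ L)) : Ω) = (((τ * σ) _ : ↥(M ⊔ L)) : Ω)
      rw [AlgEquiv.mul_apply, AlgEquiv.mul_apply, e1, step σ τ, step τ σ, comm τ ⟨x, hx'⟩]
    · -- x ∈ L
      have hx' : x ∈ L := hx
      have fixρ : ∀ ρ : ↥(M ⊔ L) ≃ₐ[K] ↥(M ⊔ L),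
          σ (ρ ⟨x, hL hx'⟩) = ρ ⟨x, hL hx'⟩ := by
        intro ρ
        have hmem : (↑(ρ (IntermediateField.inclusion hL ⟨x, hx'⟩)) : Ω) ∈ L := by
          rw [hrL ρ ⟨x, hx'⟩]; exact (rL ρ ⟨x, hx'⟩).2
        have e2 : ρ (⟨x, hL hx'⟩ : ↥(M ⊔ L))
            = ⟨↑(ρ (IntermediateField.inclusion hL ⟨x, hx'⟩)), hL hmem⟩ := Subtype.ext rfl
        rw [e2]
        exact hσ _ hmem
      show (((σ * τ) _ : ↥(M ⊔ L)) : Ω) = (((τ * σ) _ : ↥(M ⊔ L)) : Ω)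
      rw [AlgEquiv.mul_apply, AlgEquiv.mul_apply]
      rw [show (⟨x, (IntermediateField.sup_def M L).ge
            (IntermediateField.subset_adjoin _ _ (Or.inr hx))⟩ : ↥(M ⊔ L))
          = ⟨x, hL hx'⟩ from rfl]
      rw [fixρ τ, hσ x hx']
  ext x
  have h := AlgHom.congr_fun key x
  simpa using h
end

section
/- Let K be a field and let M₁, M₂ be Galois extensions of K inside a common field Ω, with compositum N = M₁M₂. Let σ ∈ Gal(N/K) be such that the restriction σ|_{M₂} is the identity and the restriction σ|_{M₁} lies in the center of Gal(M₁/K). Then σ lies in the center of Gal(N/K). -/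
set_option maxHeartbeats 1000000
set_option synthInstance.maxHeartbeats 400000

section aux
variable {K Ω : Type*} [Field K] [Field Ω] [Algebra K Ω]

lemma aux_stable (M N : IntermediateField K Ω) [Normal K ↥M] (h : M ≤ N)
    (τ : ↥N ≃ₐ[K] ↥N) {x : Ω} (hx : x ∈ M) : (τ ⟨x, h hx⟩ : Ω) ∈ M := by
  set g : ↥M →ₐ[K] Ω := (N.val.comp τ.toAlgHom).comp (IntermediateField.inclusion h) with hg
  have h1 : g.fieldRange ≤ IntermediateField.normalClosure K (↥M) Ω := by
    rw [normalClosure_def]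
    exact le_iSup (fun f : ↥M →ₐ[K] Ω => f.fieldRange) g
  rw [IntermediateField.normalClosure_of_normal M] at h1
  exact h1 ⟨⟨x, hx⟩, rfl⟩

/-- Restriction of an automorphism of `N` to a normal subextension `M ≤ N`. -/
def auxRestrict (M N : IntermediateField K Ω) [Normal K ↥M] (h : M ≤ N)
    (τ : ↥N ≃ₐ[K] ↥N) : ↥M ≃ₐ[K] ↥M where
  toFun x := ⟨(τ ⟨x, h x.2⟩ : Ω), aux_stable M N h τ x.2⟩
  invFun x := ⟨(τ.symm ⟨x, h x.2⟩ : Ω), aux_stable M N h τ.symm x.2⟩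
  left_inv x := by
    ext
    have : (⟨(τ ⟨(x : Ω), h x.2⟩ : Ω), h (aux_stable M N h τ x.2)⟩ : ↥N)
        = τ ⟨(x : Ω), h x.2⟩ := Subtype.ext rfl
    simp [this]
  right_inv x := by
    ext
    have : (⟨(τ.symm ⟨(x : Ω), h x.2⟩ : Ω), h (aux_stable M N h τ.symm x.2)⟩ : ↥N)
        = τ.symm ⟨(x : Ω), h x.2⟩ := Subtype.ext rfl
    simp [this]
  map_mul' x y := by
    ext
    have h0 : (⟨(x : Ω) * (y : Ω), h (mul_mem x.2 y.2)⟩ : ↥N)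
        = ⟨(x : Ω), h x.2⟩ * ⟨(y : Ω), h y.2⟩ := rfl
    show (τ ⟨(x : Ω) * (y : Ω), _⟩ : Ω) = _
    rw [h0, map_mul]
    rfl
  map_add' x y := by
    ext
    have h0 : (⟨(x : Ω) + (y : Ω), h (add_mem x.2 y.2)⟩ : ↥N)
        = ⟨(x : Ω), h x.2⟩ + ⟨(y : Ω), h y.2⟩ := rfl
    show (τ ⟨(x : Ω) + (y : Ω), _⟩ : Ω) = _
    rw [h0, map_add]
    rfl
  commutes' k := by
    ext
    have h0 : (⟨algebraMap K Ω k, h (algebraMap K ↥M k).2⟩ : ↥N)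
        = algebraMap K ↥N k := Subtype.ext rfl
    show (τ ⟨algebraMap K Ω k, _⟩ : Ω) = _
    rw [h0, AlgEquiv.commutes]
    rfl

end aux

/-- Let `K` be a field and let `M₁, M₂` be Galois extensions of `K` inside a common field `Ω`, with
compositum `N = M₁M₂`.  Let `σ ∈ Gal(N/K)` be such that the restriction `σ|_{M₂}` is the
identity and the restriction `σ|_{M₁}` lies in the center of `Gal(M₁/K)`.  Then `σ` lies in the
center of `Gal(N/K)`.

The restriction of `σ` to `M₁` is encoded by an automorphism `σ₁` of `M₁` agreeing with `σ`
on elements of `M₁` (viewed inside the compositum `N = M₁ ⊔ M₂`). -/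
theorem statement3 (K Ω : Type*) [Field K] [Field Ω] [Algebra K Ω]
    (M₁ M₂ : IntermediateField K Ω) [IsGalois K M₁] [IsGalois K M₂]
    (σ : ↥(M₁ ⊔ M₂) ≃ₐ[K] ↥(M₁ ⊔ M₂))
    (σ₁ : ↥M₁ ≃ₐ[K] ↥M₁)
    (hres : ∀ (x : Ω) (hx : x ∈ M₁),
      (σ ⟨x, (le_sup_left : M₁ ≤ M₁ ⊔ M₂) hx⟩ : Ω) = (σ₁ ⟨x, hx⟩ : Ω))
    (hcenter : ∀ τ₁ : ↥M₁ ≃ₐ[K] ↥M₁, σ₁ * τ₁ = τ₁ * σ₁)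
    (hfix : ∀ (x : Ω) (hx : x ∈ M₂), (σ ⟨x, (le_sup_right : M₂ ≤ M₁ ⊔ M₂) hx⟩ : Ω) = x) :
    ∀ τ : ↥(M₁ ⊔ M₂) ≃ₐ[K] ↥(M₁ ⊔ M₂), σ * τ = τ * σ := by
  intro τ
  have hL : M₁ ≤ M₁ ⊔ M₂ := le_sup_left
  have hR : M₂ ≤ M₁ ⊔ M₂ := le_sup_right
  set τ₁ := auxRestrict M₁ (M₁ ⊔ M₂) hL τ with hτ₁
  have H : ∀ (x : Ω) (hx : x ∈ IntermediateField.adjoin K ((M₁ : Set Ω) ∪ (M₂ : Set Ω))),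
      (σ (τ ⟨x, hx⟩) : Ω) = (τ (σ ⟨x, hx⟩) : Ω) := by
    intro x hx
    induction hx using IntermediateField.adjoin_induction with
    | mem x hx =>
      rcases hx with hx1 | hx2
      · -- x ∈ M₁
        have key := congrArg (fun f : ↥M₁ ≃ₐ[K] ↥M₁ => ((f ⟨x, hx1⟩ : ↥M₁) : Ω)) (hcenter τ₁)
        simp only [AlgEquiv.mul_apply] at key
        have hτx : (τ ⟨x, hL hx1⟩ : ↥(M₁ ⊔ M₂))
            = ⟨((τ₁ ⟨x, hx1⟩ : ↥M₁) : Ω), hL (τ₁ ⟨x, hx1⟩).2⟩ := Subtype.ext rfl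
        have hσx : (σ ⟨x, hL hx1⟩ : ↥(M₁ ⊔ M₂))
            = ⟨((σ₁ ⟨x, hx1⟩ : ↥M₁) : Ω), hL (σ₁ ⟨x, hx1⟩).2⟩ :=
          Subtype.ext (hres x hx1)
        calc (σ (τ ⟨x, hL hx1⟩) : Ω)
            = (σ ⟨((τ₁ ⟨x, hx1⟩ : ↥M₁) : Ω), hL (τ₁ ⟨x, hx1⟩).2⟩ : Ω) := by rw [hτx]
          _ = ((σ₁ (τ₁ ⟨x, hx1⟩) : ↥M₁) : Ω) := by rw [hres _ (τ₁ ⟨x, hx1⟩).2]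
          _ = ((τ₁ (σ₁ ⟨x, hx1⟩) : ↥M₁) : Ω) := key
          _ = (τ ⟨((σ₁ ⟨x, hx1⟩ : ↥M₁) : Ω), hL (σ₁ ⟨x, hx1⟩).2⟩ : Ω) := rfl
          _ = (τ (σ ⟨x, hL hx1⟩) : Ω) := by rw [hσx]
      · -- x ∈ M₂
        have h2 : (τ ⟨x, hR hx2⟩ : Ω) ∈ M₂ :=
          aux_stable M₂ (M₁ ⊔ M₂) hR τ hx2
        have e1 : σ (τ ⟨x, hR hx2⟩) = τ ⟨x, hR hx2⟩ := by
          have h3 := hfix _ h2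
          have heq : (⟨(τ ⟨x, hR hx2⟩ : Ω), hR h2⟩ : ↥(M₁ ⊔ M₂))
              = τ ⟨x, hR hx2⟩ := Subtype.ext rfl
          rw [heq] at h3
          exact Subtype.ext h3
        have e2 : σ (⟨x, hR hx2⟩ : ↥(M₁ ⊔ M₂)) = ⟨x, hR hx2⟩ :=
          Subtype.ext (hfix x hx2)
        show (σ (τ ⟨x, hR hx2⟩) : Ω) = (τ (σ ⟨x, hR hx2⟩) : Ω)
        rw [e1, e2]
    | algebraMap k =>
      have h0 : (⟨algebraMap K Ω k, IntermediateField.algebraMap_mem _ k⟩ : ↥(M₁ ⊔ M₂))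
          = algebraMap K ↥(M₁ ⊔ M₂) k := Subtype.ext rfl
      show (σ (τ ⟨algebraMap K Ω k, _⟩) : Ω) = (τ (σ ⟨algebraMap K Ω k, _⟩) : Ω)
      rw [h0]
      simp
    | add a b ha hb iha ihb =>
      have h0 : (⟨a + b, add_mem ha hb⟩ : ↥(M₁ ⊔ M₂)) = ⟨a, ha⟩ + ⟨b, hb⟩ := rfl
      show (σ (τ ⟨a + b, _⟩) : Ω) = (τ (σ ⟨a + b, _⟩) : Ω)
      rw [h0, map_add, map_add, map_add, map_add]
      push_cast
      rw [iha, ihb]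
    | inv a ha iha =>
      have h0 : (⟨a⁻¹, inv_mem ha⟩ : ↥(M₁ ⊔ M₂)) = (⟨a, ha⟩ : ↥(M₁ ⊔ M₂))⁻¹ := rfl
      show (σ (τ ⟨a⁻¹, _⟩) : Ω) = (τ (σ ⟨a⁻¹, _⟩) : Ω)
      rw [h0, map_inv₀, map_inv₀, map_inv₀, map_inv₀]
      exact congrArg (fun t => t⁻¹) iha
    | mul a b ha hb iha ihb =>
      have h0 : (⟨a * b, mul_mem ha hb⟩ : ↥(M₁ ⊔ M₂)) = ⟨a, ha⟩ * ⟨b, hb⟩ := rfl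
      show (σ (τ ⟨a * b, _⟩) : Ω) = (τ (σ ⟨a * b, _⟩) : Ω)
      rw [h0, map_mul, map_mul, map_mul, map_mul]
      push_cast
      rw [iha, ihb]
  ext y
  obtain ⟨y, hy⟩ := y
  exact H y hy
end

section
/- Let p be a prime, Ω a field, and K ⊆ M ⊆ N ⊆ Ω a tower of fields such that N/K is a finite Galois extension and [N : M] = p². Let F ⊆ Ω be a finite Galois extension of K with [F : K] < p. Then N ∩ F = M ∩ F. -/
open IntermediateField Module

/-- Let `p` be a prime, `Ω` a field, and `K ⊆ M ⊆ N ⊆ Ω` a tower of fields such that `N/K` is a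
finite Galois extension and `[N : M] = p²`.  Let `F ⊆ Ω` be a finite Galois extension of `K`
with `[F : K] < p`.  Then `N ∩ F = M ∩ F`. -/
theorem statement4 (p : ℕ) (hp : p.Prime) (K Ω : Type*) [Field K] [Field Ω] [Algebra K Ω]
    (M N F : IntermediateField K Ω) (hMN : M ≤ N)
    [IsGalois K N] [FiniteDimensional K N]
    (hdeg : Module.finrank ↥M ↥(IntermediateField.extendScalars hMN) = p ^ 2)
    [IsGalois K F] [FiniteDimensional K F]
    (hF : Module.finrank K F < p) :
    N ⊓ F = M ⊓ F := by
  have hMfd : FiniteDimensional K M :=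
    FiniteDimensional.of_injective (IntermediateField.inclusion hMN).toLinearMap
      (IntermediateField.inclusion hMN).injective
  set L : IntermediateField K Ω := N ⊓ F with hL
  have hLF : L ≤ F := inf_le_right
  have hLfd : FiniteDimensional K L :=
    FiniteDimensional.of_injective (IntermediateField.inclusion hLF).toLinearMap
      (IntermediateField.inclusion hLF).injective
  have hLN : L ≤ N := inf_le_left
  have hME : M ≤ M ⊔ L := le_sup_left
  have hEN : M ⊔ L ≤ N := sup_le hMN hLN
  -- the relative degree d = [M ⊔ L : M]
  set d := IntermediateField.relfinrank M (M ⊔ L) with hd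
  -- d divides p ^ 2
  have hdvd : d ∣ p ^ 2 := by
    have := IntermediateField.relfinrank_mul_relfinrank hME hEN
    rw [IntermediateField.relfinrank_eq_finrank_of_le hMN, hdeg] at this
    exact ⟨_, this.symm⟩
  -- finrank K M * d = finrank K (M ⊔ L)
  have hmul : finrank K M * d = finrank K ↥(M ⊔ L) :=
    IntermediateField.finrank_bot_mul_relfinrank hME
  -- d ≤ finrank K L
  have hdle : d ≤ finrank K L := by
    have h1 : finrank K ↥(M ⊔ L) ≤ finrank K M * finrank K L :=
      IntermediateField.finrank_sup_le M L
    have hMpos : 0 < finrank K M := finrank_pos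
    have := hmul ▸ h1
    exact le_of_mul_le_mul_left this hMpos
  -- finrank K L ≤ finrank K F < p
  have hLlt : d < p := by
    refine lt_of_le_of_lt (hdle.trans ?_) hF
    have : L ≤ F := hLF
    exact LinearMap.finrank_le_finrank_of_injective
      (f := (IntermediateField.inclusion hLF).toLinearMap)
      (IntermediateField.inclusion hLF).injective
  -- hence d = 1
  have hd1 : d = 1 := by
    obtain ⟨k, hk, hkd⟩ := (Nat.dvd_prime_pow hp).1 hdvd
    rw [hkd] at hLlt ⊢
    rcases k with _ | k
    · rfl
    · exact absurd hLlt (not_lt.2 (Nat.le_self_pow (Nat.succ_ne_zero k) p))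
  -- so M ⊔ L = M, i.e. L ≤ M
  have hEq : M ⊔ L = M := by
    have : finrank K M = finrank K ↥(M ⊔ L) := by rw [← hmul, hd1, mul_one]
    exact (IntermediateField.eq_of_le_of_finrank_eq hME this).symm
  have hLM : L ≤ M := le_trans le_sup_right hEq.le
  exact le_antisymm (le_inf hLM hLF) (inf_le_inf_right F hMN)
end

section
/- Let p be a prime, q = p², and let K be a finite extension of ℚ_p inside a fixed algebraic closure of ℚ_p, with valuation ring O, maximal ideal P, and ramification index e over ℚ_p. Let m ≥ 1 be an integer with q·m ≥ e, and let σ be a ℚ_p-algebra automorphism of K such that σ(x) − x ∈ P^m for all x ∈ O. Then for every α ∈ K one has |σ(α)^q − α^q|_p ≤ p⁻¹ · max(1, |σ(α)|_p)^q · max(1, |α|_p)^q. -/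
open IntermediateField

/-- The unique extension of the `p`-adic absolute value to the algebraic closure of `ℚ_p`
(normalized by `|p|_p = p⁻¹`), given on `α` by `‖N_{ℚ_p(α)/ℚ_p}(α)‖ ^ (1/[ℚ_p(α):ℚ_p])`. -/
noncomputable def padicAbs (p : ℕ) [Fact p.Prime] (α : AlgebraicClosure ℚ_[p]) : ℝ :=
  ‖Algebra.norm ℚ_[p] (AdjoinSimple.gen ℚ_[p] α)‖ ^
    ((Module.finrank ℚ_[p] ℚ_[p]⟮α⟯ : ℝ)⁻¹)

/-- `e` is the ramification index over `ℚ_p` of a finite extension `K` of `ℚ_p` (inside a fixed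
algebraic closure of `ℚ_p`): equivalently, the value group of the `p`-adic absolute value on
`K \ {0}` is exactly `p^{ℤ/e}`.  With this normalization, for `x` in the valuation ring `O` of
`K` and `m ∈ ℕ`, membership `x ∈ P^m` in the `m`-th power of the maximal ideal `P` of `O` is
equivalent to `|x|_p ≤ p^{-m/e}`. -/
def IsRamificationIdx (p : ℕ) [Fact p.Prime]
    (K : IntermediateField ℚ_[p] (AlgebraicClosure ℚ_[p])) (e : ℕ) : Prop :=
  0 < e ∧
  (∀ x ∈ K, x ≠ 0 → ∃ m : ℤ, padicAbs p x = (p : ℝ) ^ (-(m : ℝ) / (e : ℝ))) ∧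
  (∀ m : ℤ, ∃ x ∈ K, x ≠ 0 ∧ padicAbs p x = (p : ℝ) ^ (-(m : ℝ) / (e : ℝ)))

namespace Statement6Aux
set_option linter.unusedSectionVars false
set_option synthInstance.maxHeartbeats 1000000
set_option maxHeartbeats 2000000

/-- `‖N(gen)‖ = ‖(minpoly x).coeff 0‖`. -/
lemma abs_norm_gen {p : ℕ} [Fact p.Prime] {L : Type*} [Field L] [Algebra ℚ_[p] L] {x : L}
    (hx : IsIntegral ℚ_[p] x) :
    ‖Algebra.norm ℚ_[p] (AdjoinSimple.gen ℚ_[p] x)‖ = ‖(minpoly ℚ_[p] x).coeff 0‖ := by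
  have h := Algebra.PowerBasis.norm_gen_eq_coeff_zero_minpoly
    (IntermediateField.adjoin.powerBasis hx)
  rw [IntermediateField.adjoin.powerBasis_gen, minpoly_gen] at h
  rw [h, norm_mul, norm_pow, norm_neg, norm_one, one_pow, one_mul]

variable {p : ℕ} [Fact p.Prime]
  {K : IntermediateField ℚ_[p] (AlgebraicClosure ℚ_[p])} [FiniteDimensional ℚ_[p] ↥K]

/-- The candidate absolute value on `K`, defined via the field norm. -/
noncomputable def A (K : IntermediateField ℚ_[p] (AlgebraicClosure ℚ_[p])) (x : ↥K) : ℝ :=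
  ‖Algebra.norm ℚ_[p] x‖ ^ ((Module.finrank ℚ_[p] ↥K : ℝ)⁻¹)

lemma finrank_pos : 0 < Module.finrank ℚ_[p] ↥K := Module.finrank_pos

lemma A_nonneg (x : ↥K) : 0 ≤ A K x := Real.rpow_nonneg (norm_nonneg _) _

lemma A_zero : A K 0 = 0 := by
  have : (Algebra.norm ℚ_[p] (0 : ↥K)) = 0 := Algebra.norm_zero
  rw [A, this, norm_zero, Real.zero_rpow]
  exact inv_ne_zero (Nat.cast_ne_zero.2 finrank_pos.ne')

lemma A_mul (x y : ↥K) : A K (x * y) = A K x * A K y := by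
  rw [A, A, A, map_mul, norm_mul, Real.mul_rpow (norm_nonneg _) (norm_nonneg _)]

lemma A_one : A K 1 = 1 := by
  rw [A, map_one, norm_one, Real.one_rpow]

lemma A_pow (x : ↥K) (k : ℕ) : A K (x ^ k) = A K x ^ k := by
  induction k with
  | zero => simp [A_one]
  | succ n ih => rw [pow_succ, pow_succ, A_mul, ih]

/-- helper : `(a^n)^(n⁻¹) = a`. -/
lemma rpow_natCast_inv {a : ℝ} (ha : 0 ≤ a) {n : ℕ} (hn : 0 < n) :
    (a ^ n) ^ ((n : ℝ))⁻¹ = a := by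
  rw [← Real.rpow_natCast a n, ← Real.rpow_mul ha,
    mul_inv_cancel₀ (Nat.cast_ne_zero.2 hn.ne'), Real.rpow_one]

lemma A_algebraMap (c : ℚ_[p]) : A K (algebraMap ℚ_[p] ↥K c) = ‖c‖ := by
  rw [A, Algebra.norm_algebraMap, norm_pow, rpow_natCast_inv (norm_nonneg _) finrank_pos]

lemma A_natCast (n : ℕ) : A K (n : ↥K) = ‖(n : ℚ_[p])‖ := by
  rw [← map_natCast (algebraMap ℚ_[p] ↥K) n, A_algebraMap]

lemma A_neg (x : ↥K) : A K (-x) = A K x := by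
  have : (-x : ↥K) = (-1) * x := by ring
  rw [this, A_mul, show ((-1 : ↥K)) = algebraMap ℚ_[p] ↥K (-1) by simp, A_algebraMap]
  simp

lemma A_inv (x : ↥K) : A K x⁻¹ = (A K x)⁻¹ := by
  rcases eq_or_ne x 0 with rfl | hx
  · simp [A_zero]
  · have h : A K x * A K x⁻¹ = 1 := by
      rw [← A_mul, mul_inv_cancel₀ hx, A_one]
    exact eq_inv_of_mul_eq_one_right h

lemma A_equiv (σ : ↥K ≃ₐ[ℚ_[p]] ↥K) (x : ↥K) : A K (σ x) = A K x := by
  rw [A, A, Algebra.norm_eq_of_algEquiv]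

/-- The bridge: `padicAbs` of an element of `K` is computed by the norm from `K`. -/
lemma bridge (x : ↥K) : padicAbs p (x : AlgebraicClosure ℚ_[p]) = A K x := by
  have hxi : IsIntegral ℚ_[p] x := IsIntegral.of_finite _ _
  have hxa : IsIntegral ℚ_[p] (x : AlgebraicClosure ℚ_[p]) := by
    have := hxi.map K.val
    simpa using this
  have hmp : minpoly ℚ_[p] (x : AlgebraicClosure ℚ_[p]) = minpoly ℚ_[p] x :=
    minpoly.algHom_eq K.val (K.val.toRingHom.injective) x
  have hd : Module.finrank ℚ_[p] ℚ_[p]⟮(x : AlgebraicClosure ℚ_[p])⟯ =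
      (minpoly ℚ_[p] x).natDegree := by
    rw [IntermediateField.adjoin.finrank hxa, hmp]
  set F : IntermediateField ℚ_[p] ↥K := IntermediateField.adjoin ℚ_[p] {x} with hF
  have hd' : Module.finrank ℚ_[p] ↥F = (minpoly ℚ_[p] x).natDegree :=
    IntermediateField.adjoin.finrank hxi
  have hdeg : 0 < (minpoly ℚ_[p] x).natDegree := minpoly.natDegree_pos hxi
  have hr : 0 < Module.finrank ↥F ↥K := Module.finrank_pos
  have htower : (minpoly ℚ_[p] x).natDegree * Module.finrank ↥F ↥K =
      Module.finrank ℚ_[p] ↥K := by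
    rw [← hd']
    exact Module.finrank_mul_finrank ℚ_[p] ↥F ↥K
  rw [padicAbs, abs_norm_gen hxa, hmp, hd, A, Algebra.norm_eq_norm_adjoin ℚ_[p] x,
    norm_pow, abs_norm_gen hxi]
  rw [← Real.rpow_natCast (‖(minpoly ℚ_[p] x).coeff 0‖) (Module.finrank ↥F ↥K),
    ← Real.rpow_mul (norm_nonneg _)]
  congr 1
  rw [← htower]
  have h1 : ((minpoly ℚ_[p] x).natDegree : ℝ) ≠ 0 := Nat.cast_ne_zero.2 hdeg.ne'
  have h2 : ((Module.finrank ↥F ↥K : ℕ) : ℝ) ≠ 0 := Nat.cast_ne_zero.2 hr.ne'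
  push_cast
  field_simp


open Module in
/-- Ultrametric inequality for the sup norm on `ℚ_p^n`. -/
lemma pi_add_le_max {n : ℕ} (v w : Fin n → ℚ_[p]) : ‖v + w‖ ≤ max ‖v‖ ‖w‖ := by
  rw [pi_norm_le_iff_of_nonneg (le_max_iff.2 (Or.inl (norm_nonneg _)))]
  intro i
  refine le_trans (Padic.nonarchimedean _ _) (max_le_max ?_ ?_) <;>
    exact norm_le_pi_norm _ i

open Module in
/-- From compactness: a quasi-ultrametric bound for `A`. -/
lemma exists_C : ∃ C : ℝ, 1 ≤ C ∧ ∀ x y : ↥K, A K (x + y) ≤ C * max (A K x) (A K y) := by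
  classical
  set n := finrank ℚ_[p] ↥K with hn
  have hnpos : 0 < n := finrank_pos
  set b : Basis (Fin n) ℚ_[p] ↥K := finBasis ℚ_[p] ↥K with hb
  set G : (↥K) → ℝ := fun x => ‖Algebra.norm ℚ_[p] x‖ with hG
  -- continuity of the norm form in coordinates
  set g : (Fin n → ℚ_[p]) →ₗ[ℚ_[p]] Matrix (Fin n) (Fin n) ℚ_[p] :=
    (Algebra.leftMulMatrix b).toLinearMap.comp
      (b.equivFun.symm : (Fin n → ℚ_[p]) →ₗ[ℚ_[p]] ↥K) with hg
  have hgc : Continuous g := g.continuous_on_pi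
  have hΦc : Continuous (fun v : Fin n → ℚ_[p] => G (b.equivFun.symm v)) := by
    have : (fun v : Fin n → ℚ_[p] => G (b.equivFun.symm v)) =
        fun v => ‖(g v).det‖ := by
      funext v
      simp only [hG, hg, LinearMap.comp_apply, AlgHom.toLinearMap_apply]
      rw [Algebra.norm_eq_matrix_det b]
      rfl
    rw [this]
    exact (hgc.matrix_det).norm
  set S : Set (Fin n → ℚ_[p]) := Metric.sphere 0 1 with hS
  have hScompact : IsCompact S := isCompact_sphere 0 1
  have hSne : S.Nonempty := by
    set w : Fin n → ℚ_[p] := Pi.single (⟨0, hnpos⟩ : Fin n) (1:ℚ_[p]) with hw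
    refine ⟨w, ?_⟩
    rw [mem_sphere_zero_iff_norm]
    refine le_antisymm ?_ ?_
    · rw [pi_norm_le_iff_of_nonneg zero_le_one]
      intro i
      rcases eq_or_ne i ⟨0, hnpos⟩ with rfl | hi
      · simp [hw]
      · simp [hw, Pi.single_eq_of_ne hi]
    · calc (1:ℝ) = ‖w ⟨0, hnpos⟩‖ := by simp [hw]
        _ ≤ _ := norm_le_pi_norm _ _
  obtain ⟨v₁, hv₁S, hmin⟩ := hScompact.exists_isMinOn hSne hΦc.continuousOn
  obtain ⟨v₂, hv₂S, hmax⟩ := hScompact.exists_isMaxOn hSne hΦc.continuousOn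
  set c := G (b.equivFun.symm v₁) with hc
  set Cm := G (b.equivFun.symm v₂) with hCm
  have hcpos : 0 < c := by
    have hv₁ : v₁ ≠ 0 := by
      intro h
      rw [mem_sphere_zero_iff_norm, h, norm_zero] at hv₁S
      norm_num at hv₁S
    have : b.equivFun.symm v₁ ≠ 0 := (LinearEquiv.map_ne_zero_iff _).2 hv₁
    have := (Algebra.norm_ne_zero_iff (R := ℚ_[p])).2 this
    simpa [hG, hc] using (norm_pos_iff).2 this
  -- the two-sided bound for nonzero x
  have key : ∀ x : ↥K, x ≠ 0 →
      c * ‖b.equivFun x‖ ^ n ≤ G x ∧ G x ≤ Cm * ‖b.equivFun x‖ ^ n := by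
    intro x hx
    set v := b.equivFun x with hv
    have hvne : v ≠ 0 := (LinearEquiv.map_ne_zero_iff _).2 hx
    -- the sup norm is attained at a coordinate
    haveI : Nonempty (Fin n) := ⟨⟨0, hnpos⟩⟩
    obtain ⟨i₀, -, hi₀⟩ := Finset.exists_mem_eq_sup (Finset.univ : Finset (Fin n))
      (Finset.univ_nonempty) (fun i => ‖v i‖₊)
    have hnorm_eq : ‖v‖ = ‖v i₀‖ := by
      rw [Pi.norm_def, hi₀]
      rfl
    have hvi₀ : v i₀ ≠ 0 := by
      intro h
      apply hvne
      have h0 : ‖v‖ = 0 := by rw [hnorm_eq, h, norm_zero]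
      exact norm_eq_zero.1 h0
    set lam := (v i₀)⁻¹ with hlam
    have hlamnorm : ‖lam‖ * ‖v‖ = 1 := by
      rw [hnorm_eq, hlam, norm_inv, inv_mul_cancel₀ (norm_ne_zero_iff.2 hvi₀)]
    have hvpos : 0 < ‖v‖ := norm_pos_iff.2 hvne
    have hlmpos : 0 < ‖lam‖ := by
      rw [norm_pos_iff]
      exact inv_ne_zero hvi₀
    -- scale x into the sphere
    have hmem : b.equivFun (lam • x) ∈ S := by
      rw [hS, mem_sphere_zero_iff_norm, map_smul]
      show ‖lam • v‖ = 1
      rw [norm_smul, hlamnorm]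
    have hGs : G (lam • x) = ‖lam‖ ^ n * G x := by
      rw [hG]
      show ‖Algebra.norm ℚ_[p] (lam • x)‖ = _
      rw [Algebra.smul_def, map_mul, Algebra.norm_algebraMap, norm_mul, norm_pow, hn]
    have h1 := hmin (hmem)
    have h2 := hmax (hmem)
    simp only [Set.mem_setOf_eq, LinearEquiv.symm_apply_apply] at h1 h2
    rw [hGs] at h1 h2
    have hlv : ‖lam‖ = ‖v‖⁻¹ := by
      field_simp at hlamnorm ⊢
      linarith [hlamnorm]
    constructor
    · have := h1
      rw [hlv] at this
      have h3 : c ≤ ‖v‖⁻¹ ^ n * G x := this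
      calc c * ‖v‖ ^ n ≤ (‖v‖⁻¹ ^ n * G x) * ‖v‖ ^ n := by
            apply mul_le_mul_of_nonneg_right h3 (by positivity)
        _ = G x := by
            rw [inv_pow, mul_comm (‖v‖ ^ n)⁻¹ (G x), mul_assoc, inv_mul_cancel₀ (pow_ne_zero _ hvpos.ne'), mul_one]
    · have := h2
      rw [hlv] at this
      have h3 : ‖v‖⁻¹ ^ n * G x ≤ Cm := this
      calc G x = (‖v‖⁻¹ ^ n * G x) * ‖v‖ ^ n := by rw [inv_pow, mul_comm (‖v‖ ^ n)⁻¹ (G x), mul_assoc, inv_mul_cancel₀ (pow_ne_zero _ hvpos.ne'), mul_one]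
        _ ≤ Cm * ‖v‖ ^ n := by
            apply mul_le_mul_of_nonneg_right h3 (by positivity)
  -- conclude
  refine ⟨max ((Cm / c) ^ ((n : ℝ))⁻¹) 1, le_max_right _ _, ?_⟩
  intro x y
  rcases eq_or_ne x 0 with rfl | hx
  · rw [zero_add]
    calc A K y ≤ max (A K 0) (A K y) := le_max_right _ _
      _ ≤ _ := le_mul_of_one_le_left (le_max_iff.2 (Or.inl (A_nonneg _))) (le_max_right _ _)
  rcases eq_or_ne y 0 with rfl | hy
  · rw [add_zero]
    calc A K x ≤ max (A K x) (A K 0) := le_max_left _ _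
      _ ≤ _ := le_mul_of_one_le_left (le_max_iff.2 (Or.inl (A_nonneg _))) (le_max_right _ _)
  rcases eq_or_ne (x + y) 0 with h0 | hxy
  · rw [h0, A_zero]
    exact mul_nonneg (le_trans zero_le_one (le_max_right _ _))
      (le_trans (A_nonneg x) (le_max_left _ _))
  have hx1 := key x hx
  have hy1 := key y hy
  have hxy1 := key (x + y) hxy
  have hmax2 : ‖b.equivFun (x + y)‖ ^ n ≤ max (‖b.equivFun x‖ ^ n) (‖b.equivFun y‖ ^ n) := by
    have h4 : ‖b.equivFun (x+y)‖ ≤ max ‖b.equivFun x‖ ‖b.equivFun y‖ := by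
      rw [map_add]
      exact pi_add_le_max _ _
    calc ‖b.equivFun (x + y)‖ ^ n ≤ (max ‖b.equivFun x‖ ‖b.equivFun y‖) ^ n :=
          pow_le_pow_left₀ (norm_nonneg _) h4 n
      _ = max (‖b.equivFun x‖ ^ n) (‖b.equivFun y‖ ^ n) := by
          rcases le_total ‖b.equivFun x‖ ‖b.equivFun y‖ with h | h
          · rw [max_eq_right h, max_eq_right (pow_le_pow_left₀ (norm_nonneg _) h n)]
          · rw [max_eq_left h, max_eq_left (pow_le_pow_left₀ (norm_nonneg _) h n)]
  have hbxne : ∀ z : ↥K, z ≠ 0 → (0:ℝ) < ‖b.equivFun z‖ := fun z hz =>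
    norm_pos_iff.2 ((LinearEquiv.map_ne_zero_iff _).2 hz)
  have hCmnn : 0 ≤ Cm := by
    have h5 : 0 < ‖b.equivFun x‖ ^ n := pow_pos (hbxne x hx) n
    nlinarith [hx1.1, hx1.2, hcpos]
  have hGxy : G (x + y) ≤ (Cm / c) * max (G x) (G y) := by
    calc G (x + y) ≤ Cm * ‖b.equivFun (x+y)‖ ^ n := hxy1.2
      _ ≤ Cm * max (‖b.equivFun x‖ ^ n) (‖b.equivFun y‖ ^ n) := by
          exact mul_le_mul_of_nonneg_left hmax2 hCmnn
      _ ≤ (Cm / c) * max (G x) (G y) := by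
          have hxb : ‖b.equivFun x‖ ^ n ≤ G x / c := by
            rw [le_div_iff₀ hcpos]; nlinarith [hx1.1]
          have hyb : ‖b.equivFun y‖ ^ n ≤ G y / c := by
            rw [le_div_iff₀ hcpos]; nlinarith [hy1.1]
          have : max (‖b.equivFun x‖ ^ n) (‖b.equivFun y‖ ^ n) ≤ max (G x) (G y) / c := by
            rw [max_le_iff]
            constructor
            · exact hxb.trans (by apply div_le_div_of_nonneg_right ?_ hcpos.le; exact le_max_left _ _)
            · exact hyb.trans (by apply div_le_div_of_nonneg_right ?_ hcpos.le; exact le_max_right _ _)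
          calc Cm * max (‖b.equivFun x‖ ^ n) (‖b.equivFun y‖ ^ n)
              ≤ Cm * (max (G x) (G y) / c) := mul_le_mul_of_nonneg_left this hCmnn
            _ = (Cm / c) * max (G x) (G y) := by ring
  -- take n-th roots
  have hCc1 : (1:ℝ) ≤ Cm / c := by
    have h6 := (hx1.1).trans hx1.2
    have hvn : 0 < ‖b.equivFun x‖ ^ n := pow_pos (hbxne x hx) n
    rw [le_div_iff₀ hcpos]
    nlinarith
  have hGnn : ∀ z : ↥K, 0 ≤ G z := fun z => norm_nonneg _
  have hstep : A K (x + y) ≤ ((Cm / c) * max (G x) (G y)) ^ ((n : ℝ))⁻¹ := by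
    rw [A]
    exact Real.rpow_le_rpow (hGnn _) hGxy (by positivity)
  refine hstep.trans ?_
  rw [Real.mul_rpow (by linarith) (le_max_iff.2 (Or.inl (hGnn x)))]
  apply mul_le_mul
  · exact le_max_left _ _
  · rcases le_total (G x) (G y) with h | h
    · rw [max_eq_right h]
      have : (G y) ^ ((n:ℝ))⁻¹ = A K y := rfl
      rw [this]
      exact le_max_right _ _
    · rw [max_eq_left h]
      exact le_max_left _ _
  · positivity
  · positivity


/-- Auxiliary natural number inequality. -/
lemma nat_aux (t : ℕ) : ∃ k : ℕ, 0 < k ∧ t * k + 1 ≤ 2 ^ k := by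
  refine ⟨2 ^ (t + 1), Nat.pow_pos (by norm_num), ?_⟩
  have h1 : t + 1 ≤ 2 ^ t := Nat.lt_two_pow_self
  have h2 : 2 * t + 1 ≤ 2 ^ (t + 1) := by
    calc 2 * t + 1 ≤ 2 * (t + 1) := by omega
      _ ≤ 2 * 2 ^ t := by omega
      _ = 2 ^ (t + 1) := by ring
  calc t * 2 ^ (t + 1) + 1 ≤ (t + 1) * 2 ^ (t + 1) := by
        have : 1 ≤ 2 ^ (t+1) := Nat.one_le_two_pow
        nlinarith
    _ ≤ 2 ^ t * 2 ^ (t + 1) := Nat.mul_le_mul_right _ h1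
    _ = 2 ^ (2 * t + 1) := by rw [← pow_add]; ring_nf
    _ ≤ 2 ^ (2 ^ (t + 1)) := Nat.pow_le_pow_right (by norm_num) h2

/-- Auxiliary real inequality: the Artin trick limit argument. -/
lemma real_aux {a M C : ℝ} (ha : 0 ≤ a) (hM : 0 ≤ M) (hC : 1 ≤ C)
    (h : ∀ k : ℕ, a ^ (2 ^ k - 1) ≤ C ^ k * M ^ (2 ^ k - 1)) : a ≤ M := by
  by_contra hcon
  push_neg at hcon
  have hM0 : 0 < M := by
    rcases hM.lt_or_eq with h' | h'
    · exact h'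
    · exfalso
      have h1 := h 1
      norm_num at h1
      rw [← h'] at h1
      simp at h1
      nlinarith
  set r := a / M with hr
  have hr1 : 1 < r := (one_lt_div hM0).2 hcon
  have hrk : ∀ k : ℕ, r ^ (2 ^ k - 1) ≤ C ^ k := by
    intro k
    rw [hr, div_pow, div_le_iff₀ (pow_pos hM0 _)]
    exact h k
  obtain ⟨t, ht⟩ := pow_unbounded_of_one_lt C hr1
  obtain ⟨k, hk0, hk⟩ := nat_aux t
  have h1 : C ^ k < (r ^ t) ^ k := by
    apply pow_lt_pow_left₀ ht (by linarith) hk0.ne'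
  rw [← pow_mul] at h1
  have h2 : r ^ (t * k) ≤ r ^ (2 ^ k - 1) := pow_le_pow_right₀ hr1.le (by omega)
  exact lt_irrefl _ ((h1.trans_le h2).trans_le (hrk k))

lemma A_sum_pow {C : ℝ} (hC1 : 1 ≤ C)
    (hC : ∀ x y : ↥K, A K (x + y) ≤ C * max (A K x) (A K y)) :
    ∀ (k : ℕ) (f : ℕ → ↥K) (M : ℝ), 0 ≤ M → (∀ i < 2 ^ k, A K (f i) ≤ M) →
      A K (∑ i ∈ Finset.range (2 ^ k), f i) ≤ C ^ k * M := by
  intro k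
  induction k with
  | zero =>
      intro f M hM hf
      simpa using hf 0 (by norm_num)
  | succ k ih =>
      intro f M hM hf
      have hsplit : ∑ i ∈ Finset.range (2 ^ (k + 1)), f i =
          (∑ i ∈ Finset.range (2 ^ k), f i) + ∑ i ∈ Finset.range (2 ^ k), f (2 ^ k + i) := by
        rw [show 2 ^ (k + 1) = 2 ^ k + 2 ^ k by ring, Finset.sum_range_add]
      rw [hsplit]
      refine (hC _ _).trans ?_
      have h1 := ih f M hM (fun i hi => hf i (by calc i < 2 ^ k := hi
        _ ≤ 2 ^ (k + 1) := Nat.pow_le_pow_right (by norm_num) (by omega)))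
      have h2 := ih (fun i => f (2 ^ k + i)) M hM (fun i hi => hf _ (by
        have : 2 ^ (k + 1) = 2 ^ k + 2 ^ k := by ring
        omega))
      calc C * max (A K (∑ i ∈ Finset.range (2 ^ k), f i))
            (A K (∑ i ∈ Finset.range (2 ^ k), f (2 ^ k + i))) ≤ C * (C ^ k * M) := by
            apply mul_le_mul_of_nonneg_left (max_le h1 h2) (by linarith)
        _ = C ^ (k + 1) * M := by ring

/-- The ultrametric inequality for `A`. -/
lemma A_add (x y : ↥K) : A K (x + y) ≤ max (A K x) (A K y) := by
  obtain ⟨C, hC1, hC⟩ := exists_C (K := K)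
  set M := max (A K x) (A K y) with hM
  have hM0 : 0 ≤ M := le_trans (A_nonneg x) (le_max_left _ _)
  apply real_aux (A_nonneg _) hM0 hC1
  intro k
  set N := 2 ^ k - 1 with hN
  have hN1 : N + 1 = 2 ^ k := by
    have : 1 ≤ 2 ^ k := Nat.one_le_two_pow
    omega
  have hexp : (x + y) ^ N =
      ∑ i ∈ Finset.range (N + 1), x ^ i * y ^ (N - i) * (N.choose i : ↥K) := add_pow x y N
  have hbound : ∀ i < 2 ^ k, A K (x ^ i * y ^ (N - i) * (N.choose i : ↥K)) ≤ M ^ N := by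
    intro i hi
    have hiN : i ≤ N := by omega
    have hchoose : A K ((N.choose i : ℕ) : ↥K) ≤ 1 := by
      rw [A_natCast]
      have := Padic.norm_int_le_one (p := p) (N.choose i : ℤ)
      push_cast at this
      exact this
    rw [A_mul, A_mul, A_pow, A_pow]
    have h1 : A K x ^ i ≤ M ^ i := pow_le_pow_left₀ (A_nonneg _) (le_max_left _ _) i
    have h2 : A K y ^ (N - i) ≤ M ^ (N - i) :=
      pow_le_pow_left₀ (A_nonneg _) (le_max_right _ _) _
    have h3 : A K x ^ i * A K y ^ (N - i) * A K ((N.choose i : ℕ) : ↥K) ≤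
        M ^ i * M ^ (N - i) * 1 := by
      apply mul_le_mul (mul_le_mul h1 h2 (pow_nonneg (A_nonneg _) _) (pow_nonneg hM0 _)) hchoose
        (A_nonneg _) (mul_nonneg (pow_nonneg hM0 _) (pow_nonneg hM0 _))
    calc A K x ^ i * A K y ^ (N - i) * A K ((N.choose i : ℕ) : ↥K) ≤
          M ^ i * M ^ (N - i) * 1 := h3
      _ = M ^ (i + (N - i)) := by rw [mul_one, pow_add]
      _ = M ^ N := by rw [Nat.add_sub_cancel' hiN]
  have := A_sum_pow hC1 hC k (fun i => x ^ i * y ^ (N - i) * (N.choose i : ↥K)) (M ^ N)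
    (pow_nonneg hM0 N) hbound
  rw [← hN1, ← hexp] at this
  calc A K (x + y) ^ (2 ^ k - 1) = A K ((x + y) ^ N) := by rw [A_pow, hN]
    _ ≤ C ^ k * M ^ N := this
    _ = C ^ k * M ^ (2 ^ k - 1) := by rw [hN]

lemma A_finset_sum (s : Finset ℕ) (f : ℕ → ↥K) {M : ℝ} (hM : 0 ≤ M)
    (h : ∀ i ∈ s, A K (f i) ≤ M) : A K (∑ i ∈ s, f i) ≤ M := by
  classical
  induction s using Finset.cons_induction with
  | empty => simpa [A_zero] using hM
  | cons a s ha ih =>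
      rw [Finset.sum_cons]
      refine (A_add _ _).trans (max_le (h a (Finset.mem_cons_self a s)) ?_)
      exact ih (fun i hi => h i (Finset.mem_cons.2 (Or.inr hi)))

end Statement6Aux

/-- Let `p` be a prime, `q = p²`, and let `K` be a finite extension of `ℚ_p` inside a fixed
algebraic closure of `ℚ_p`, with valuation ring `O`, maximal ideal `P`, and ramification
index `e` over `ℚ_p`.  Let `m ≥ 1` be an integer with `q·m ≥ e`, and let `σ` be a
`ℚ_p`-algebra automorphism of `K` such that `σ(x) − x ∈ P^m` for all `x ∈ O`.  Then for every
`α ∈ K` one has `|σ(α)^q − α^q|_p ≤ p⁻¹ · max(1, |σ(α)|_p)^q · max(1, |α|_p)^q`.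

Membership `σ(x) − x ∈ P^m` is expressed by `|σ(x) − x|_p ≤ p^{-m/e}`. -/
theorem statement6 (p : ℕ) [Fact p.Prime]
    (K : IntermediateField ℚ_[p] (AlgebraicClosure ℚ_[p])) [FiniteDimensional ℚ_[p] ↥K]
    (e : ℕ) (he : IsRamificationIdx p K e)
    (m : ℕ) (hm : 1 ≤ m) (hqm : e ≤ p ^ 2 * m)
    (σ : ↥K ≃ₐ[ℚ_[p]] ↥K)
    (hσ : ∀ x : ↥K, padicAbs p (x : AlgebraicClosure ℚ_[p]) ≤ 1 →
      padicAbs p ((σ x : AlgebraicClosure ℚ_[p]) - (x : AlgebraicClosure ℚ_[p])) ≤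
        (p : ℝ) ^ (-(m : ℝ) / (e : ℝ)))
    (α : ↥K) :
    padicAbs p ((σ α : AlgebraicClosure ℚ_[p]) ^ (p ^ 2) -
        (α : AlgebraicClosure ℚ_[p]) ^ (p ^ 2)) ≤
      (p : ℝ)⁻¹ * max 1 (padicAbs p (σ α : AlgebraicClosure ℚ_[p])) ^ (p ^ 2) *
        max 1 (padicAbs p (α : AlgebraicClosure ℚ_[p])) ^ (p ^ 2) := by
  open Statement6Aux in
  have hp1 : (1:ℝ) < (p:ℝ) := by exact_mod_cast (Fact.out : p.Prime).one_lt
  have hppos : (0:ℝ) < (p:ℝ) := by linarith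
  have he0 : (0:ℝ) < (e:ℝ) := by exact_mod_cast he.1
  -- translate `hσ` to the `A` world
  have hσ' : ∀ x : ↥K, A K x ≤ 1 → A K (σ x - x) ≤ (p:ℝ) ^ (-(m:ℝ)/(e:ℝ)) := by
    intro x hx
    have h0 := hσ x (by rw [bridge]; exact hx)
    have hc : ((σ x - x : ↥K) : AlgebraicClosure ℚ_[p])
        = ((σ x : ↥K) : AlgebraicClosure ℚ_[p]) - ((x : ↥K) : AlgebraicClosure ℚ_[p]) := by
      push_cast
      ring
    rw [← hc, bridge] at h0
    exact h0
  have hexp1 : (p:ℝ) ^ (-(m:ℝ)/(e:ℝ)) ≤ 1 := by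
    apply Real.rpow_le_one_of_one_le_of_nonpos hp1.le
    apply div_nonpos_of_nonpos_of_nonneg _ he0.le
    simp
  -- the central claim, for elements of absolute value at most 1
  have main : ∀ γ : ↥K, A K γ ≤ 1 → A K (σ γ ^ (p ^ 2) - γ ^ (p ^ 2)) ≤ (p:ℝ)⁻¹ := by
    intro γ hγ
    set t := σ γ - γ with ht
    have hσγ : σ γ = γ + t := by rw [ht]; ring
    have hAt : A K t ≤ (p:ℝ) ^ (-(m:ℝ)/(e:ℝ)) := hσ' γ hγ
    have hAt1 : A K t ≤ 1 := hAt.trans hexp1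
    set q := p ^ 2 with hq
    have hrw : σ γ ^ q - γ ^ q =
        ∑ i ∈ Finset.range q, γ ^ i * t ^ (q - i) * (q.choose i : ↥K) := by
      rw [hσγ, add_pow, Finset.sum_range_succ, Nat.sub_self, pow_zero, Nat.choose_self,
        Nat.cast_one, mul_one, mul_one, add_sub_cancel_right]
    rw [hrw]
    apply A_finset_sum _ _ (by positivity)
    intro i hi
    rw [Finset.mem_range] at hi
    rcases Nat.eq_zero_or_pos i with rfl | hipos
    · simp only [pow_zero, Nat.sub_zero, Nat.choose_zero_right, Nat.cast_one, one_mul, mul_one]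
      calc A K (t ^ q) = A K t ^ q := A_pow t q
        _ ≤ ((p:ℝ) ^ (-(m:ℝ)/(e:ℝ))) ^ q := pow_le_pow_left₀ (A_nonneg _) hAt q
        _ = (p:ℝ) ^ ((-(m:ℝ)/(e:ℝ)) * q) := by
            rw [← Real.rpow_natCast ((p:ℝ) ^ (-(m:ℝ)/(e:ℝ))) q, ← Real.rpow_mul hppos.le]
        _ ≤ (p:ℝ) ^ (-1 : ℝ) := by
            apply Real.rpow_le_rpow_of_exponent_le hp1.le
            rw [div_mul_eq_mul_div, div_le_iff₀ he0]
            have hqm' : (e : ℝ) ≤ (q:ℝ) * (m:ℝ) := by exact_mod_cast hqm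
            nlinarith [hqm']
        _ = (p:ℝ)⁻¹ := Real.rpow_neg_one _
    · have hdvd : p ∣ q.choose i :=
        (Fact.out : p.Prime).dvd_choose_pow hipos.ne' (by omega)
      obtain ⟨d, hd⟩ := hdvd
      have hch : A K ((q.choose i : ℕ) : ↥K) ≤ (p:ℝ)⁻¹ := by
        rw [A_natCast, hd]
        push_cast
        rw [norm_mul, Padic.norm_p]
        have hd1 : ‖((d:ℤ) : ℚ_[p])‖ ≤ 1 := Padic.norm_int_le_one _
        push_cast at hd1
        calc (p:ℝ)⁻¹ * ‖(d:ℚ_[p])‖ ≤ (p:ℝ)⁻¹ * 1 :=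
              mul_le_mul_of_nonneg_left hd1 (by positivity)
          _ = (p:ℝ)⁻¹ := mul_one _
      have h1 : A K γ ^ i ≤ 1 := pow_le_one₀ (A_nonneg _) hγ
      have h2 : A K t ^ (q - i) ≤ 1 := pow_le_one₀ (A_nonneg _) hAt1
      calc A K (γ ^ i * t ^ (q - i) * ((q.choose i : ℕ) : ↥K))
          = A K γ ^ i * A K t ^ (q - i) * A K ((q.choose i : ℕ) : ↥K) := by
            rw [A_mul, A_mul, A_pow, A_pow]
        _ ≤ 1 * 1 * (p:ℝ)⁻¹ := by
            apply mul_le_mul (mul_le_mul h1 h2 (pow_nonneg (A_nonneg _) _) zero_le_one) hch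
              (A_nonneg _) (by norm_num)
        _ = (p:ℝ)⁻¹ := by ring
  -- rewrite the goal in the `A` world
  have hg : ((σ α : ↥K) : AlgebraicClosure ℚ_[p]) ^ (p ^ 2) -
      ((α : ↥K) : AlgebraicClosure ℚ_[p]) ^ (p ^ 2) =
      ((σ α ^ (p ^ 2) - α ^ (p ^ 2) : ↥K) : AlgebraicClosure ℚ_[p]) := by
    push_cast
    ring
  rw [hg, bridge, bridge, bridge, A_equiv σ α]
  rcases le_or_gt (A K α) 1 with hle | hgt
  · have h1 : max 1 (A K α) = 1 := max_eq_left hle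
    rw [h1]
    simpa using main α hle
  · have hα0 : α ≠ 0 := by
      intro h
      rw [h, A_zero] at hgt
      linarith
    have hσα0 : σ α ≠ 0 := fun h => hα0 (by simpa using congrArg σ.symm h)
    have hβ1 : A K α⁻¹ ≤ 1 := by
      rw [A_inv]
      exact inv_le_one_of_one_le₀ hgt.le
    have hmain := main α⁻¹ hβ1
    have hσβ : σ α⁻¹ = (σ α)⁻¹ := map_inv₀ σ α
    have hfact : σ α ^ (p ^ 2) - α ^ (p ^ 2) =
        -((σ α) ^ (p ^ 2) * α ^ (p ^ 2) * (σ α⁻¹ ^ (p ^ 2) - α⁻¹ ^ (p ^ 2))) := by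
      rw [hσβ, inv_pow, inv_pow]
      have e1 : σ α ^ (p ^ 2) * (σ α ^ (p ^ 2))⁻¹ = 1 := mul_inv_cancel₀ (pow_ne_zero _ hσα0)
      have e2 : α ^ (p ^ 2) * (α ^ (p ^ 2))⁻¹ = 1 := mul_inv_cancel₀ (pow_ne_zero _ hα0)
      linear_combination (α ^ (p ^ 2)) * e1 - (σ α ^ (p ^ 2)) * e2
    calc A K (σ α ^ (p ^ 2) - α ^ (p ^ 2))
        = A K (σ α) ^ (p ^ 2) * A K α ^ (p ^ 2) * A K (σ α⁻¹ ^ (p ^ 2) - α⁻¹ ^ (p ^ 2)) := by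
          rw [hfact, A_neg, A_mul, A_mul, A_pow, A_pow]
      _ = A K α ^ (p ^ 2) * A K α ^ (p ^ 2) * A K (σ α⁻¹ ^ (p ^ 2) - α⁻¹ ^ (p ^ 2)) := by
          rw [A_equiv σ α]
      _ ≤ A K α ^ (p ^ 2) * A K α ^ (p ^ 2) * (p:ℝ)⁻¹ := by
          apply mul_le_mul_of_nonneg_left hmain
          exact mul_nonneg (pow_nonneg (A_nonneg _) _) (pow_nonneg (A_nonneg _) _)
      _ = (p:ℝ)⁻¹ * max 1 (A K α) ^ (p ^ 2) * max 1 (A K α) ^ (p ^ 2) := by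
          rw [max_eq_right hgt.le]
          ring
end

section
/- Let K be a field equipped with a nonarchimedean absolute value |·|, let σ be a field automorphism of K with |σ(x)| = |x| for all x ∈ K, let Q ≥ 1 be an integer and 0 < c ≤ 1 a real number. Suppose that |σ(α) − α^Q| ≤ c for every α ∈ K with |α| ≤ 1. Then for every nonzero α ∈ K one has |σ(α) − α^Q| ≤ c · max(1, |σ(α)|) · max(1, |α|)^Q. -/
/-- Let `K` be a field equipped with a nonarchimedean absolute value `|·|`, let `σ` be a field
automorphism of `K` with `|σ(x)| = |x|` for all `x ∈ K`, let `Q ≥ 1` be an integer and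
`0 < c ≤ 1` a real number.  Suppose that `|σ(α) − α^Q| ≤ c` for every `α ∈ K` with `|α| ≤ 1`.
Then for every nonzero `α ∈ K` one has
`|σ(α) − α^Q| ≤ c · max(1, |σ(α)|) · max(1, |α|)^Q`. -/
theorem statement7 (K : Type*) [Field K] (v : AbsoluteValue K ℝ)
    (hna : ∀ x y : K, v (x + y) ≤ max (v x) (v y))
    (σ : K ≃+* K) (hσ : ∀ x : K, v (σ x) = v x)
    (Q : ℕ) (hQ : 1 ≤ Q) (c : ℝ) (hc0 : 0 < c) (hc1 : c ≤ 1)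
    (h : ∀ α : K, v α ≤ 1 → v (σ α - α ^ Q) ≤ c) :
    ∀ α : K, α ≠ 0 → v (σ α - α ^ Q) ≤ c * max 1 (v (σ α)) * max 1 (v α) ^ Q := by
  intro α hα
  have hm1 : (1:ℝ) ≤ max 1 (v (σ α)) := le_max_left _ _
  have hm2 : (1:ℝ) ≤ max 1 (v α) ^ Q := one_le_pow₀ (le_max_left _ _)
  rcases le_or_gt (v α) 1 with h1 | h1
  · calc v (σ α - α ^ Q) ≤ c := h α h1
      _ ≤ c * max 1 (v (σ α)) * max 1 (v α) ^ Q := by nlinarith [mul_le_mul hm1 hm2 (by norm_num : (0:ℝ) ≤ 1) (by linarith : (0:ℝ) ≤ 1 ⊔ v (σ α))]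
  · have hσα : σ α ≠ 0 := by
      simpa using (map_ne_zero σ).mpr hα
    have hβ : v α⁻¹ ≤ 1 := by
      rw [map_inv₀]
      exact inv_le_one_of_one_le₀ h1.le
    have key : σ α - α ^ Q = -(σ α * α ^ Q) * (σ α⁻¹ - α⁻¹ ^ Q) := by
      rw [map_inv₀, inv_pow]
      field_simp
      ring
    have hvpos : 0 < v α := v.pos hα
    have hσpos : 0 < v (σ α) := v.pos hσα
    have hQle : v (σ α⁻¹ - α⁻¹ ^ Q) ≤ c := h _ hβ
    have hmax1 : max 1 (v (σ α)) = v (σ α) := max_eq_right (by rw [hσ]; exact h1.le)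
    have hmax2 : max 1 (v α) = v α := max_eq_right h1.le
    calc v (σ α - α ^ Q) = v (σ α) * v α ^ Q * v (σ α⁻¹ - α⁻¹ ^ Q) := by
          rw [key, map_mul, v.map_neg, map_mul, map_pow]
      _ ≤ v (σ α) * v α ^ Q * c := by
          apply mul_le_mul_of_nonneg_left hQle (by positivity)
      _ = c * max 1 (v (σ α)) * max 1 (v α) ^ Q := by rw [hmax1, hmax2]; ring
end

section
/- Let K₀ ⊆ K be finite extensions of ℚ_p inside a fixed algebraic closure of ℚ_p such that K/K₀ is totally ramified, and let e be the ramification index of K over ℚ_p. Let Q ≥ 1 be an integer and let σ be a ℚ_p-algebra automorphism of K with σ(K₀) = K₀ and such that |σ(β) − β^Q|_p < 1 for all β in the valuation ring O_{K₀}. Then for every α in the valuation ring O_K one has |σ(α) − α^Q|_p ≤ p^{−1/e}. -/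
set_option linter.unusedSectionVars false
set_option maxHeartbeats 1000000
set_option synthInstance.maxHeartbeats 400000

open IntermediateField

section Aux

open Filter

variable (p : ℕ) [Fact p.Prime]

noncomputable def Fabs {L : Type*} [Field L] [Algebra ℚ_[p] L] [FiniteDimensional ℚ_[p] L]
    (x : L) : ℝ :=
  ‖Algebra.norm ℚ_[p] x‖ ^ ((Module.finrank ℚ_[p] L : ℝ)⁻¹)

section UltraAux

lemma pi_padic_add_le {κ : Type*} [Fintype κ] (u w : κ → ℚ_[p]) :
    ‖u + w‖ ≤ max ‖u‖ ‖w‖ := by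
  refine pi_norm_le_iff_of_nonneg (le_max_of_le_left (norm_nonneg u)) |>.2 fun i => ?_
  refine le_trans (Padic.nonarchimedean (u i) (w i)) ?_
  exact max_le_max (norm_le_pi_norm u i) (norm_le_pi_norm w i)

lemma pi_padic_sum_le {ι κ : Type*} [Fintype κ] (s : Finset ι) (f : ι → (κ → ℚ_[p])) {B : ℝ}
    (hB : 0 ≤ B) (h : ∀ i ∈ s, ‖f i‖ ≤ B) : ‖∑ i ∈ s, f i‖ ≤ B := by
  classical
  induction s using Finset.cons_induction with
  | empty => simpa using hB
  | cons a s ha ih =>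
    rw [Finset.sum_cons]
    refine le_trans (pi_padic_add_le p _ _) (max_le ?_ ?_)
    · exact h a (Finset.mem_cons_self a s)
    · exact ih fun i hi => h i (Finset.mem_cons_of_mem hi)

end UltraAux

section Ultra
variable {L : Type*} [Field L] [Algebra ℚ_[p] L] [FiniteDimensional ℚ_[p] L]

lemma Fabs_nonneg (x : L) : 0 ≤ Fabs p x := Real.rpow_nonneg (norm_nonneg _) _

lemma Fabs_zero : Fabs p (0 : L) = 0 := by
  have h : (0:ℝ) < (Module.finrank ℚ_[p] L : ℝ)⁻¹ := by
    simp [Module.finrank_pos]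
  simp [Fabs, Real.zero_rpow (ne_of_gt h)]

lemma Fabs_one : Fabs p (1 : L) = 1 := by simp [Fabs]

lemma Fabs_mul (x y : L) : Fabs p (x * y) = Fabs p x * Fabs p y := by
  simp [Fabs, map_mul, norm_mul, Real.mul_rpow (norm_nonneg _) (norm_nonneg _)]

lemma Fabs_pow (x : L) (k : ℕ) : Fabs p (x ^ k) = Fabs p x ^ k := by
  induction k with
  | zero => simp [Fabs_one]
  | succ k ih => rw [pow_succ, Fabs_mul, ih, pow_succ]

lemma Fabs_eq_zero_iff {x : L} : Fabs p x = 0 ↔ x = 0 := by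
  constructor
  · intro h
    by_contra hx
    have hN : Algebra.norm ℚ_[p] x ≠ 0 := (Algebra.norm_ne_zero_iff).2 hx
    have : (0:ℝ) < ‖Algebra.norm ℚ_[p] x‖ := norm_pos_iff.2 hN
    have := Real.rpow_pos_of_pos this ((Module.finrank ℚ_[p] L : ℝ)⁻¹)
    rw [Fabs] at h
    linarith
  · rintro rfl; exact Fabs_zero p

lemma Fabs_pos {x : L} (hx : x ≠ 0) : 0 < Fabs p x :=
  lt_of_le_of_ne (Fabs_nonneg p x) (fun h => hx ((Fabs_eq_zero_iff p).1 h.symm))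

lemma Fabs_algebraMap (c : ℚ_[p]) : Fabs p (algebraMap ℚ_[p] L c) = ‖c‖ := by
  rw [Fabs, Algebra.norm_algebraMap, norm_pow, ← Real.rpow_natCast (‖c‖) _,
    ← Real.rpow_mul (norm_nonneg _)]
  rw [mul_inv_cancel₀ (by exact_mod_cast Module.finrank_pos.ne' : (Module.finrank ℚ_[p] L : ℝ) ≠ 0),
    Real.rpow_one]

lemma Fabs_smul (c : ℚ_[p]) (x : L) : Fabs p (c • x) = ‖c‖ * Fabs p x := by
  rw [Algebra.smul_def, Fabs_mul, Fabs_algebraMap]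

lemma Fabs_natCast_le_one (k : ℕ) : Fabs p (k : L) ≤ 1 := by
  have h : (k : L) = algebraMap ℚ_[p] L (k : ℚ_[p]) := by push_cast; simp
  rw [h, Fabs_algebraMap]
  exact_mod_cast Padic.norm_int_le_one (k : ℤ)

lemma Fabs_def (x : L) :
    Fabs p x = ‖Algebra.norm ℚ_[p] x‖ ^ ((Module.finrank ℚ_[p] L : ℝ)⁻¹) := rfl

lemma Fabs_add_le (x y : L) : Fabs p (x + y) ≤ max (Fabs p x) (Fabs p y) := by
  classical
  by_cases hx0 : x = 0
  · simp [hx0, le_max_iff, le_refl]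
  by_cases hxy0 : x + y = 0
  · rw [hxy0, Fabs_zero]
    exact le_max_of_le_left (Fabs_nonneg p x)
  set n := Module.finrank ℚ_[p] L with hn
  have hnpos : 0 < n := Module.finrank_pos
  set b := Module.finBasis ℚ_[p] L with hb
  set eL := b.equivFun with heL
  set G : (Fin n → ℚ_[p]) → ℝ := fun v => Fabs p (eL.symm v) with hGdef
  have hGnrm : ∀ z : L, G (eL z) = Fabs p z := by
    intro z; simp [hGdef]
  have hGsmul : ∀ (a : ℚ_[p]) (v : Fin n → ℚ_[p]), G (a • v) = ‖a‖ * G v := by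
    intro a v
    simp only [hGdef, map_smul]
    exact Fabs_smul p a _
  have hGcont : Continuous G := by
    have h1 : Continuous fun v : Fin n → ℚ_[p] => (Algebra.leftMulMatrix b) (eL.symm v) :=
      ((Algebra.leftMulMatrix b).toLinearMap.comp
        eL.symm.toLinearMap).continuous_of_finiteDimensional
    have h3 : Continuous fun v : Fin n → ℚ_[p] =>
        ‖((Algebra.leftMulMatrix b) (eL.symm v)).det‖ := h1.matrix_det.norm
    have h4 := h3.rpow_const (p := (n : ℝ)⁻¹) (fun v => Or.inr (by positivity))
    have heq : G = fun v : Fin n → ℚ_[p] =>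
        ‖((Algebra.leftMulMatrix b) (eL.symm v)).det‖ ^ ((n : ℝ)⁻¹) := by
      funext v
      rw [hGdef]
      show Fabs p (eL.symm v) = _
      rw [Fabs_def, Algebra.norm_eq_matrix_det b]
    rw [heq]
    exact h4
  have hSne : (Metric.sphere (0 : Fin n → ℚ_[p]) 1).Nonempty := by
    refine ⟨Pi.single ⟨0, hnpos⟩ 1, ?_⟩
    rw [Metric.mem_sphere, dist_zero_right, Pi.norm_single, norm_one]
  obtain ⟨vmin, hvminS, hvmin⟩ :=
    (isCompact_sphere (0 : Fin n → ℚ_[p]) 1).exists_isMinOn hSne hGcont.continuousOn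
  obtain ⟨vmax, hvmaxS, hvmax⟩ :=
    (isCompact_sphere (0 : Fin n → ℚ_[p]) 1).exists_isMaxOn hSne hGcont.continuousOn
  set c := G vmin with hcdef
  set C := G vmax with hCdef
  have hvmin0 : eL.symm vmin ≠ 0 := by
    intro h
    have hv0 : vmin = 0 := by simpa using congrArg eL h
    rw [Metric.mem_sphere, dist_zero_right, hv0] at hvminS
    simp at hvminS
  have hc : 0 < c := Fabs_pos p hvmin0
  have hC : 0 < C := lt_of_lt_of_le hc (hvmin hvmaxS)
  have hppos : (1 : ℝ) < (p : ℝ) := by exact_mod_cast (Fact.out : p.Prime).one_lt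
  have hpR : (0 : ℝ) < (p : ℝ) := lt_trans zero_lt_one hppos
  -- key scaling estimates
  have hkey : ∀ z : L, z ≠ 0 → c * ‖eL z‖ ≤ Fabs p z ∧ Fabs p z ≤ C * ‖eL z‖ := by
    intro z hz
    have hvne : eL z ≠ 0 := by
      intro h
      exact hz (by simpa using congrArg eL.symm h)
    obtain ⟨i₀, _, hi₀⟩ := Finset.exists_mem_eq_sup (Finset.univ : Finset (Fin n))
      ⟨⟨0, hnpos⟩, Finset.mem_univ _⟩ (fun i => ‖(eL z) i‖₊)
    have hnv : ‖eL z‖ = ‖(eL z) i₀‖ := by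
      rw [Pi.norm_def, hi₀]; rfl
    have hvi0 : (eL z) i₀ ≠ 0 := by
      intro h
      rw [h, norm_zero] at hnv
      exact hvne (norm_eq_zero.1 hnv)
    set k : ℤ := -((eL z) i₀).valuation with hk
    have hnvk : ‖eL z‖ = (p : ℝ) ^ k := by rw [hnv, Padic.norm_eq_zpow_neg_valuation hvi0]
    have hpq0 : (p : ℚ_[p]) ≠ 0 := by
      exact_mod_cast (Fact.out : p.Prime).ne_zero
    have hna : ‖((p : ℚ_[p]) ^ k : ℚ_[p])‖ = ((p : ℝ) ^ k)⁻¹ := by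
      rw [norm_zpow, Padic.norm_p, inv_zpow]
    have hmem : ((p : ℚ_[p]) ^ k : ℚ_[p]) • (eL z) ∈ Metric.sphere (0 : Fin n → ℚ_[p]) 1 := by
      rw [Metric.mem_sphere, dist_zero_right, norm_smul, hna, hnvk]
      rw [inv_mul_cancel₀ (ne_of_gt (zpow_pos hpR k))]
    have hGv : G (((p : ℚ_[p]) ^ k : ℚ_[p]) • (eL z)) = ((p : ℝ) ^ k)⁻¹ * Fabs p z := by
      rw [hGsmul, hna, hGnrm]
    have hzpos : (0:ℝ) < (p : ℝ) ^ k := zpow_pos hpR k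
    constructor
    · have h1 : c ≤ ((p : ℝ) ^ k)⁻¹ * Fabs p z := by
        rw [← hGv]; exact hvmin hmem
      rw [hnvk]
      calc c * (p:ℝ)^k ≤ (((p : ℝ) ^ k)⁻¹ * Fabs p z) * (p:ℝ)^k := by
            exact mul_le_mul_of_nonneg_right h1 hzpos.le
        _ = Fabs p z := by field_simp
    · have h1 : ((p : ℝ) ^ k)⁻¹ * Fabs p z ≤ C := by
        rw [← hGv]; exact hvmax hmem
      rw [hnvk]
      have := mul_le_mul_of_nonneg_right h1 hzpos.le
      calc Fabs p z = (((p : ℝ) ^ k)⁻¹ * Fabs p z) * (p:ℝ)^k := by field_simp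
        _ ≤ C * (p:ℝ)^k := this
  -- power trick
  set M := max (Fabs p x) (Fabs p y) with hM
  have hM0 : 0 < M := lt_max_iff.2 (Or.inl (Fabs_pos p hx0))
  set R := C / c with hR
  have hRpos : 0 < R := div_pos hC hc
  have main : ∀ N : ℕ, Fabs p (x + y) ^ N ≤ R * M ^ N := by
    intro N
    have hterm : ∀ kk ∈ Finset.range (N + 1),
        Fabs p (x ^ kk * y ^ (N - kk) * (N.choose kk : L)) ≤ M ^ N := by
      intro kk hkk
      have hkle : kk ≤ N := Nat.lt_succ_iff.1 (Finset.mem_range.1 hkk)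
      rw [Fabs_mul, Fabs_mul, Fabs_pow, Fabs_pow]
      have h1 : Fabs p x ^ kk ≤ M ^ kk :=
        pow_le_pow_left₀ (Fabs_nonneg p x) (le_max_left _ _) kk
      have h2 : Fabs p y ^ (N - kk) ≤ M ^ (N - kk) :=
        pow_le_pow_left₀ (Fabs_nonneg p y) (le_max_right _ _) (N - kk)
      have h3 : Fabs p ((N.choose kk : ℕ) : L) ≤ 1 := Fabs_natCast_le_one p _
      calc Fabs p x ^ kk * Fabs p y ^ (N - kk) * Fabs p ((N.choose kk : ℕ) : L)
          ≤ M ^ kk * M ^ (N - kk) * 1 := by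
            refine mul_le_mul (mul_le_mul h1 h2
              (pow_nonneg (Fabs_nonneg p y) _) (pow_nonneg hM0.le _)) h3
              (Fabs_nonneg p _) (by positivity)
        _ = M ^ N := by rw [mul_one, ← pow_add, Nat.add_sub_cancel' hkle]
    have hne : (x + y) ^ N ≠ 0 := pow_ne_zero N hxy0
    have hup := (hkey ((x + y) ^ N) hne).2
    have hsum : ‖eL ((x + y) ^ N)‖ ≤ c⁻¹ * M ^ N := by
      have hexp : (x + y) ^ N =
          ∑ kk ∈ Finset.range (N + 1), x ^ kk * y ^ (N - kk) * (N.choose kk : L) := add_pow x y N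
      rw [hexp, map_sum]
      refine pi_padic_sum_le p _ _ (by positivity) ?_
      intro kk hkk
      by_cases h0 : x ^ kk * y ^ (N - kk) * (N.choose kk : L) = 0
      · rw [h0, map_zero, norm_zero]; positivity
      · have hlow := (hkey _ h0).1
        have h6 : c * ‖eL (x ^ kk * y ^ (N - kk) * (N.choose kk : L))‖ ≤ M ^ N :=
          hlow.trans (hterm kk hkk)
        calc ‖eL (x ^ kk * y ^ (N - kk) * (N.choose kk : L))‖
            = c⁻¹ * (c * ‖eL (x ^ kk * y ^ (N - kk) * (N.choose kk : L))‖) := by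
              field_simp
          _ ≤ c⁻¹ * M ^ N := mul_le_mul_of_nonneg_left h6 (by positivity)
    rw [← Fabs_pow]
    calc Fabs p ((x+y)^N) ≤ C * ‖eL ((x + y) ^ N)‖ := hup
      _ ≤ C * (c⁻¹ * M ^ N) := mul_le_mul_of_nonneg_left hsum hC.le
      _ = R * M ^ N := by rw [hR]; field_simp
  have hroot : ∀ N : ℕ, 1 ≤ N → Fabs p (x + y) ≤ R ^ ((N : ℝ)⁻¹) * M := by
    intro N hN
    have hNR : (0:ℝ) < (N : ℝ) := by exact_mod_cast hN
    have hFnn := Fabs_nonneg p (x + y)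
    have h1 : Fabs p (x + y) = ((Fabs p (x + y)) ^ N) ^ ((N : ℝ)⁻¹) := by
      rw [← Real.rpow_natCast (Fabs p (x + y)) N, ← Real.rpow_mul hFnn,
        mul_inv_cancel₀ (ne_of_gt hNR), Real.rpow_one]
    rw [h1]
    calc ((Fabs p (x + y)) ^ N) ^ ((N : ℝ)⁻¹)
        ≤ (R * M ^ N) ^ ((N : ℝ)⁻¹) :=
          Real.rpow_le_rpow (by positivity) (main N) (by positivity)
      _ = R ^ ((N : ℝ)⁻¹) * M := by
          rw [Real.mul_rpow hRpos.le (by positivity), ← Real.rpow_natCast M N,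
            ← Real.rpow_mul hM0.le, mul_inv_cancel₀ (ne_of_gt hNR), Real.rpow_one]
  have hlim : Tendsto (fun N : ℕ => R ^ ((N : ℝ)⁻¹) * M) atTop (nhds M) := by
    have h0 : Tendsto (fun N : ℕ => ((N : ℝ))⁻¹) atTop (nhds 0) :=
      tendsto_inv_atTop_zero.comp tendsto_natCast_atTop_atTop
    have h1 : Tendsto (fun N : ℕ => R ^ ((N : ℝ)⁻¹)) atTop (nhds 1) := by
      have heq2 : (fun N : ℕ => R ^ ((N : ℝ)⁻¹))
          = fun N : ℕ => Real.exp (Real.log R * ((N : ℝ)⁻¹)) := by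
        funext N
        rw [Real.rpow_def_of_pos hRpos]
      rw [heq2]
      have h2 : Tendsto (fun N : ℕ => Real.log R * ((N : ℝ)⁻¹)) atTop (nhds 0) := by
        simpa using h0.const_mul (Real.log R)
      simpa [Function.comp_def] using (Real.continuous_exp.tendsto 0).comp h2
    simpa using h1.mul_const M
  exact ge_of_tendsto hlim (eventually_atTop.2 ⟨1, fun N hN => hroot N hN⟩)
end Ultra

section More
variable {L : Type*} [Field L] [Algebra ℚ_[p] L] [FiniteDimensional ℚ_[p] L]

lemma Fabs_negone : Fabs p (-1 : L) = 1 := by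
  have h2 := Fabs_mul p (-1 : L) (-1 : L)
  rw [show ((-1 : L) * (-1 : L)) = 1 by ring, Fabs_one] at h2
  nlinarith [Fabs_nonneg p (-1 : L)]

lemma Fabs_neg (x : L) : Fabs p (-x) = Fabs p x := by
  rw [show (-x : L) = (-1) * x by ring, Fabs_mul, Fabs_negone, one_mul]

lemma Fabs_algEquiv (σ : L ≃ₐ[ℚ_[p]] L) (x : L) : Fabs p (σ x) = Fabs p x := by
  have hnorm : Algebra.norm ℚ_[p] (σ x) = Algebra.norm ℚ_[p] x := by
    rw [Algebra.norm_apply, Algebra.norm_apply]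
    have h : ((Algebra.lmul ℚ_[p] L) (σ x) : L →ₗ[ℚ_[p]] L) =
        (σ.toLinearMap ∘ₗ ((Algebra.lmul ℚ_[p] L) x : L →ₗ[ℚ_[p]] L)) ∘ₗ (σ.symm.toLinearMap) := by
      ext y
      show σ x * y = σ (x * σ.symm y)
      rw [map_mul, AlgEquiv.apply_symm_apply]
    rw [h]
    have := LinearMap.det_conj ((Algebra.lmul ℚ_[p] L) x : L →ₗ[ℚ_[p]] L) σ.toLinearEquiv
    simpa [LinearMap.comp_assoc, ← AlgEquiv.toLinearEquiv_symm, AlgEquiv.toLinearEquiv_toLinearMap] using this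
  rw [Fabs, hnorm, Fabs]


lemma Fabs_sum_le {ι : Type*} (s : Finset ι) (f : ι → L) {B : ℝ} (hB : 0 ≤ B)
    (h : ∀ i ∈ s, Fabs p (f i) ≤ B) : Fabs p (∑ i ∈ s, f i) ≤ B := by
  classical
  induction s using Finset.cons_induction with
  | empty => simpa [Fabs_zero] using hB
  | cons a s ha ih =>
    rw [Finset.sum_cons]
    refine le_trans (Fabs_add_le p _ _) (max_le (h a (Finset.mem_cons_self a s))
      (ih fun i hi => h i (Finset.mem_cons_of_mem hi)))

lemma Fabs_add_eq_left {x y : L} (h : Fabs p y < Fabs p x) : Fabs p (x + y) = Fabs p x := by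
  refine le_antisymm ((Fabs_add_le p x y).trans_eq (max_eq_left h.le)) ?_
  have h3 := Fabs_add_le p (x + y) (-y)
  rw [add_neg_cancel_right, Fabs_neg] at h3
  rcases le_max_iff.1 h3 with h4 | h4
  · exact h4
  · linarith

end More

lemma padicAbs_eq_Fabs (K : IntermediateField ℚ_[p] (AlgebraicClosure ℚ_[p]))
    [FiniteDimensional ℚ_[p] ↥K] (x : ↥K) :
    padicAbs p (x : AlgebraicClosure ℚ_[p]) = Fabs p x := by
  have hxint : IsIntegral ℚ_[p] x := IsIntegral.of_finite _ _
  have hαint : IsIntegral ℚ_[p] (x : AlgebraicClosure ℚ_[p]) := hxint.map (K.val)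
  have hμ : minpoly ℚ_[p] (x : AlgebraicClosure ℚ_[p]) = minpoly ℚ_[p] x :=
    minpoly.algHom_eq K.val (Subtype.val_injective) x
  set μ := minpoly ℚ_[p] x with hμdef
  have hd : 0 < μ.natDegree := minpoly.natDegree_pos hxint
  -- step 1
  haveI : FiniteDimensional ℚ_[p] ℚ_[p]⟮(x : AlgebraicClosure ℚ_[p])⟯ :=
    IntermediateField.adjoin.finiteDimensional hαint
  have h1 : padicAbs p (x : AlgebraicClosure ℚ_[p]) = ‖μ.coeff 0‖ ^ ((μ.natDegree : ℝ)⁻¹) := by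
    have pb := IntermediateField.adjoin.powerBasis hαint
    have hgen : Algebra.norm ℚ_[p] (AdjoinSimple.gen ℚ_[p] (x : AlgebraicClosure ℚ_[p])) =
        (-1) ^ (IntermediateField.adjoin.powerBasis hαint).dim *
          (minpoly ℚ_[p] (AdjoinSimple.gen ℚ_[p] (x : AlgebraicClosure ℚ_[p]))).coeff 0 := by
      have := Algebra.PowerBasis.norm_gen_eq_coeff_zero_minpoly
        (IntermediateField.adjoin.powerBasis hαint)
      rwa [IntermediateField.adjoin.powerBasis_gen] at this
    rw [padicAbs, hgen, IntermediateField.minpoly_gen, hμ,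
      IntermediateField.adjoin.finrank hαint, hμ]
    congr 1
    rw [norm_mul, norm_pow, norm_neg, norm_one, one_pow, one_mul]
  -- step 2
  have h2 : Fabs p x = ‖μ.coeff 0‖ ^ ((μ.natDegree : ℝ)⁻¹) := by
    have hadj := Algebra.norm_eq_norm_adjoin ℚ_[p] x
    have hgen : Algebra.norm ℚ_[p] (AdjoinSimple.gen ℚ_[p] x) =
        (-1) ^ (IntermediateField.adjoin.powerBasis hxint).dim *
          (minpoly ℚ_[p] (AdjoinSimple.gen ℚ_[p] x)).coeff 0 := by
      have := Algebra.PowerBasis.norm_gen_eq_coeff_zero_minpoly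
        (IntermediateField.adjoin.powerBasis hxint)
      rwa [IntermediateField.adjoin.powerBasis_gen] at this
    have hrank : (minpoly ℚ_[p] x).natDegree * Module.finrank ↥(IntermediateField.adjoin ℚ_[p] ({x} : Set ↥K)) ↥K
        = Module.finrank ℚ_[p] ↥K := by
      rw [← IntermediateField.adjoin.finrank hxint]
      exact Module.finrank_mul_finrank ℚ_[p] ↥(IntermediateField.adjoin ℚ_[p] ({x} : Set ↥K)) ↥K
    have hm : 0 < Module.finrank ↥(IntermediateField.adjoin ℚ_[p] ({x} : Set ↥K)) ↥K := Module.finrank_pos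
    rw [Fabs, hadj, hgen, IntermediateField.minpoly_gen, norm_pow, norm_mul, norm_pow,
      norm_neg, norm_one, one_pow, one_mul]
    rw [← Real.rpow_natCast (‖μ.coeff 0‖) (Module.finrank ↥(IntermediateField.adjoin ℚ_[p] ({x} : Set ↥K)) ↥K),
      ← Real.rpow_mul (norm_nonneg _)]
    congr 1
    rw [← hrank]
    push_cast
    field_simp
    ring_nf; rw [← hμdef]; exact mul_inv_cancel₀ (by exact_mod_cast hd.ne')
  rw [h1, h2]


end Aux

/-- Let `K₀ ⊆ K` be finite extensions of `ℚ_p` inside a fixed algebraic closure of `ℚ_p` such that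
`K/K₀` is totally ramified, and let `e` be the ramification index of `K` over `ℚ_p`.  Let
`Q ≥ 1` be an integer and let `σ` be a `ℚ_p`-algebra automorphism of `K` with `σ(K₀) = K₀` and
such that `|σ(β) − β^Q|_p < 1` for all `β` in the valuation ring `O_{K₀}`.  Then for every `α`
in the valuation ring `O_K` one has `|σ(α) − α^Q|_p ≤ p^{−1/e}`. -/
theorem statement8 (p : ℕ) [Fact p.Prime]
    (K₀ K : IntermediateField ℚ_[p] (AlgebraicClosure ℚ_[p])) (hK₀K : K₀ ≤ K)
    [FiniteDimensional ℚ_[p] ↥K₀] [FiniteDimensional ℚ_[p] ↥K]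
    (e₀ e : ℕ) (he₀ : IsRamificationIdx p K₀ e₀) (he : IsRamificationIdx p K e)
    -- `K/K₀` is totally ramified: `e(K/K₀) = e/e₀` equals the degree `[K : K₀]`
    (htot : e = Module.finrank ↥K₀ ↥(IntermediateField.extendScalars hK₀K) * e₀)
    (Q : ℕ) (hQ : 1 ≤ Q)
    (σ : ↥K ≃ₐ[ℚ_[p]] ↥K)
    -- `σ(K₀) = K₀`
    (hσK₀ : ∀ x : ↥K, ((x : AlgebraicClosure ℚ_[p]) ∈ K₀ ↔
      ((σ x : AlgebraicClosure ℚ_[p]) ∈ K₀)))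
    (hβ : ∀ β : ↥K, (β : AlgebraicClosure ℚ_[p]) ∈ K₀ →
      padicAbs p (β : AlgebraicClosure ℚ_[p]) ≤ 1 →
      padicAbs p ((σ β : AlgebraicClosure ℚ_[p]) - (β : AlgebraicClosure ℚ_[p]) ^ Q) < 1) :
    ∀ α : ↥K, padicAbs p (α : AlgebraicClosure ℚ_[p]) ≤ 1 →
      padicAbs p ((σ α : AlgebraicClosure ℚ_[p]) - (α : AlgebraicClosure ℚ_[p]) ^ Q) ≤
        (p : ℝ) ^ (-(1 : ℝ) / (e : ℝ)) := by
  intro α hα1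
  classical
  have hppos : (1 : ℝ) < (p : ℝ) := by exact_mod_cast (Fact.out : p.Prime).one_lt
  have hp0 : (0 : ℝ) < (p : ℝ) := lt_trans zero_lt_one hppos
  have he0 : 0 < e := he.1
  have he00 : 0 < e₀ := he₀.1
  set r := Module.finrank ↥K₀ ↥(IntermediateField.extendScalars hK₀K) with hr
  have hrpos : 0 < r := by
    rcases Nat.eq_zero_or_pos r with h | h
    · exfalso; rw [htot, h, zero_mul] at he0; exact Nat.lt_irrefl 0 he0
    · exact h
  have here : (e : ℝ) = (r : ℝ) * (e₀ : ℝ) := by rw [htot]; push_cast; ring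
  have hα1' : Fabs p α ≤ 1 := by rwa [padicAbs_eq_Fabs] at hα1
  have hKval : ∀ z : ↥K, z ≠ 0 → ∃ m : ℤ, Fabs p z = (p : ℝ) ^ (-(m : ℝ) / (e : ℝ)) := by
    intro z hz
    obtain ⟨m, hm⟩ := he.2.1 (z : AlgebraicClosure ℚ_[p]) z.2 (fun h => hz (Subtype.ext h))
    exact ⟨m, by rw [← padicAbs_eq_Fabs]; exact hm⟩
  have hK0val : ∀ z : ↥K, (z : AlgebraicClosure ℚ_[p]) ∈ K₀ → z ≠ 0 →
      ∃ m : ℤ, Fabs p z = (p : ℝ) ^ (-(m : ℝ) / (e₀ : ℝ)) := by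
    intro z hzK hz
    obtain ⟨m, hm⟩ := he₀.2.1 (z : AlgebraicClosure ℚ_[p]) hzK (fun h => hz (Subtype.ext h))
    exact ⟨m, by rw [← padicAbs_eq_Fabs]; exact hm⟩
  obtain ⟨πc, hπK, hπ0, hπval⟩ := he.2.2 1
  set π : ↥K := ⟨πc, hπK⟩ with hπdef
  have hπne : π ≠ 0 := fun h => hπ0 (congrArg Subtype.val h)
  have hπF : Fabs p π = (p : ℝ) ^ (-(1 : ℝ) / (e : ℝ)) := by
    rw [← padicAbs_eq_Fabs]
    simpa using hπval
  have hπpow : ∀ j : ℕ, Fabs p (π ^ j) = (p : ℝ) ^ (-(j : ℝ) / (e : ℝ)) := by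
    intro j
    rw [Fabs_pow, hπF, ← Real.rpow_natCast ((p : ℝ) ^ (-(1 : ℝ) / (e : ℝ))) j,
      ← Real.rpow_mul hp0.le]
    congr 1
    ring
  -- Step 1: every integer of `K` is congruent mod the maximal ideal to an integer of `K₀`.
  have happrox : ∃ β : ↥K, (β : AlgebraicClosure ℚ_[p]) ∈ K₀ ∧ Fabs p β ≤ 1 ∧
      Fabs p (α - β) < 1 := by
    by_contra hno
    push_neg at hno
    have hno' : ∀ β : ↥K, (β : AlgebraicClosure ℚ_[p]) ∈ K₀ → 1 ≤ Fabs p (α - β) := by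
      intro β hβK
      by_cases hb1 : Fabs p β ≤ 1
      · exact hno β hβK hb1
      · push_neg at hb1
        have h3 := Fabs_add_le p α (β - α)
        rw [show α + (β - α) = β by ring, show (β - α : ↥K) = -(α - β) by ring, Fabs_neg] at h3
        rcases le_max_iff.1 h3 with h4 | h4
        · linarith
        · linarith
    have hαu : Fabs p α = 1 := by
      refine le_antisymm hα1' ?_
      have h0 := hno' 0 (zero_mem K₀)
      simpa using h0
    have hy : ∀ β₁ β₂ : ↥K, (β₁ : AlgebraicClosure ℚ_[p]) ∈ K₀ →
        (β₂ : AlgebraicClosure ℚ_[p]) ∈ K₀ →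
        Fabs p (β₁ + β₂ * α) = max (Fabs p β₁) (Fabs p β₂) := by
      intro β₁ β₂ h1K h2K
      by_cases hb2 : β₂ = 0
      · rw [hb2, Fabs_zero, zero_mul, add_zero, max_eq_left (Fabs_nonneg p β₁)]
      have h4 : Fabs p (β₂ * α) = Fabs p β₂ := by rw [Fabs_mul, hαu, mul_one]
      rcases lt_trichotomy (Fabs p β₁) (Fabs p β₂) with hlt | heq | hgt
      · rw [show β₁ + β₂ * α = β₂ * α + β₁ by ring,
          Fabs_add_eq_left p (by rw [h4]; exact hlt), h4, max_eq_right hlt.le]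
      · set γ := β₁ / β₂ with hγ
        have hγK : (γ : AlgebraicClosure ℚ_[p]) ∈ K₀ := by
          have hcoe : (γ : AlgebraicClosure ℚ_[p]) =
              (β₁ : AlgebraicClosure ℚ_[p]) / (β₂ : AlgebraicClosure ℚ_[p]) := rfl
          rw [hcoe]
          exact div_mem h1K h2K
        have hb2F : Fabs p β₂ ≠ 0 := ne_of_gt (Fabs_pos p hb2)
        have hγ1 : Fabs p γ = 1 := by
          have h5 : Fabs p γ * Fabs p β₂ = Fabs p β₁ := by
            rw [← Fabs_mul, div_mul_cancel₀ _ hb2]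
          have h5' : Fabs p γ * Fabs p β₂ = 1 * Fabs p β₂ := by rw [h5, heq, one_mul]
          exact mul_right_cancel₀ hb2F h5'
        have h6 : 1 ≤ Fabs p (α - -γ) := by
          refine hno' (-γ) ?_
          have hcoe : ((-γ : ↥K) : AlgebraicClosure ℚ_[p]) = -(γ : AlgebraicClosure ℚ_[p]) := rfl
          rw [hcoe]
          exact neg_mem hγK
        rw [sub_neg_eq_add] at h6
        have h7 : Fabs p (α + γ) ≤ 1 := by
          refine le_trans (Fabs_add_le p α γ) ?_
          rw [hγ1]
          exact max_le hα1' le_rfl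
        have h8 : Fabs p (α + γ) = 1 := le_antisymm h7 h6
        have h9 : β₁ + β₂ * α = β₂ * (α + γ) := by
          rw [hγ, mul_add, mul_div_cancel₀ _ hb2]
          ring
        rw [h9, Fabs_mul, h8, mul_one, heq, max_self]
      · rw [Fabs_add_eq_left p (by rw [h4]; exact hgt), max_eq_left hgt.le]
    -- the family `α^i π^j` is linearly independent over `K₀`, contradicting `[K:K₀] = r`
    set w : Fin 2 × Fin r → ↥(IntermediateField.extendScalars hK₀K) := fun i =>
      ⟨(α : AlgebraicClosure ℚ_[p]) ^ (i.1 : ℕ) * (π : AlgebraicClosure ℚ_[p]) ^ (i.2 : ℕ),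
        mul_mem (pow_mem α.2 _) (pow_mem hπK _)⟩ with hw
    have hli : LinearIndependent ↥K₀ w := by
      rw [Fintype.linearIndependent_iff]
      intro g hg
      by_contra hgn
      push_neg at hgn
      obtain ⟨i₀, hi₀⟩ := hgn
      set G : Fin 2 × Fin r → ↥K := fun i =>
        ⟨((g i : ↥K₀) : AlgebraicClosure ℚ_[p]), hK₀K (g i).2⟩ with hGdef
      have hGcoe : ∀ i, ((G i : ↥K) : AlgebraicClosure ℚ_[p]) =
          ((g i : ↥K₀) : AlgebraicClosure ℚ_[p]) := fun i => rfl
      have hGK : ∀ i, ((G i : ↥K) : AlgebraicClosure ℚ_[p]) ∈ K₀ := fun i => (g i).2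
      have hG0 : ∀ i, g i ≠ 0 → G i ≠ 0 := by
        intro i h h2
        apply h
        apply Subtype.ext
        have := congrArg Subtype.val h2
        exact this
      set y : Fin r → ↥K := fun j => G (0, j) + G (1, j) * α with hydef
      set t : Fin r → ↥K := fun j => y j * π ^ (j : ℕ) with htdef
      -- transfer the vanishing sum into `K`
      have hgval : (0 : AlgebraicClosure ℚ_[p]) = ∑ i : Fin 2 × Fin r,
          ((g i : ↥K₀) : AlgebraicClosure ℚ_[p]) *
            ((α : AlgebraicClosure ℚ_[p]) ^ (i.1 : ℕ) *
             (π : AlgebraicClosure ℚ_[p]) ^ (i.2 : ℕ)) := by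
        have h0 := congrArg
          (fun z : ↥(IntermediateField.extendScalars hK₀K) => (z : AlgebraicClosure ℚ_[p])) hg
        simp only [AddSubmonoidClass.coe_finset_sum, ZeroMemClass.coe_zero] at h0
        rw [← h0]
        exact (Finset.sum_congr rfl (fun i _ => rfl)).symm
      have hsumK : ∑ j : Fin r, t j = 0 := by
        refine Subtype.ext ?_
        show ((∑ j : Fin r, t j : ↥K) : AlgebraicClosure ℚ_[p]) =
          ((0 : ↥K) : AlgebraicClosure ℚ_[p])
        rw [AddSubmonoidClass.coe_finset_sum, ZeroMemClass.coe_zero]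
        have hsplit : ∑ j : Fin r, ((t j : ↥K) : AlgebraicClosure ℚ_[p]) =
            ∑ i : Fin 2 × Fin r, ((g i : ↥K₀) : AlgebraicClosure ℚ_[p]) *
              ((α : AlgebraicClosure ℚ_[p]) ^ (i.1 : ℕ) *
               (π : AlgebraicClosure ℚ_[p]) ^ (i.2 : ℕ)) := by
          rw [Fintype.sum_prod_type, Fin.sum_univ_two, ← Finset.sum_add_distrib]
          refine Finset.sum_congr rfl fun j _ => ?_
          have hco : ((t j : ↥K) : AlgebraicClosure ℚ_[p]) =
              (((G (0, j) : ↥K) : AlgebraicClosure ℚ_[p]) +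
               ((G (1, j) : ↥K) : AlgebraicClosure ℚ_[p]) * (α : AlgebraicClosure ℚ_[p])) *
                (π : AlgebraicClosure ℚ_[p]) ^ (j : ℕ) := by
            simp only [htdef, hydef]
            push_cast
            ring
          rw [hco, hGcoe, hGcoe]
          simp only [Fin.val_zero, pow_zero, Fin.val_one, pow_one]
          ring
        rw [hsplit, ← hgval]
      -- the index set of nonvanishing inner sums
      set Tf : Finset (Fin r) := Finset.univ.filter (fun j => y j ≠ 0) with hTf
      have hyval : ∀ j, y j ≠ 0 → ∃ m : ℤ, Fabs p (t j) =
          (p : ℝ) ^ (-(((m * r + (j : ℕ) : ℤ)) : ℝ) / (e : ℝ)) := by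
        intro j hyj
        have hmax : Fabs p (y j) = max (Fabs p (G (0, j))) (Fabs p (G (1, j))) :=
          hy _ _ (hGK _) (hGK _)
        have hypos : 0 < Fabs p (y j) := Fabs_pos p hyj
        have hval : ∃ m : ℤ, Fabs p (y j) = (p : ℝ) ^ (-(m : ℝ) / (e₀ : ℝ)) := by
          rcases max_cases (Fabs p (G (0, j))) (Fabs p (G (1, j))) with ⟨hmx, _⟩ | ⟨hmx, _⟩
          · have hne : G (0, j) ≠ 0 := by
              intro h0
              rw [hmax, hmx, h0, Fabs_zero] at hypos
              exact lt_irrefl 0 hypos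
            obtain ⟨m, hm⟩ := hK0val _ (hGK (0, j)) hne
            exact ⟨m, by rw [hmax, hmx, hm]⟩
          · have hne : G (1, j) ≠ 0 := by
              intro h0
              rw [hmax, hmx, h0, Fabs_zero] at hypos
              exact lt_irrefl 0 hypos
            obtain ⟨m, hm⟩ := hK0val _ (hGK (1, j)) hne
            exact ⟨m, by rw [hmax, hmx, hm]⟩
        obtain ⟨m, hm⟩ := hval
        refine ⟨m, ?_⟩
        simp only [htdef]
        rw [Fabs_mul, hm, hπpow (j : ℕ), ← Real.rpow_add hp0]
        congr 1
        have he0R : (e : ℝ) ≠ 0 := by positivity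
        have he00R : (e₀ : ℝ) ≠ 0 := by positivity
        have hrR : (r : ℝ) ≠ 0 := by positivity
        push_cast
        rw [here]
        field_simp
        ring
      have hinj : ∀ j ∈ Tf, ∀ j' ∈ Tf, j ≠ j' → Fabs p (t j) ≠ Fabs p (t j') := by
        intro j hj j' hj' hnejj heqv
        obtain ⟨m, hm⟩ := hyval j (Finset.mem_filter.1 hj).2
        obtain ⟨m', hm'⟩ := hyval j' (Finset.mem_filter.1 hj').2
        rw [hm, hm'] at heqv
        have hexp : -(((m * r + (j : ℕ) : ℤ)) : ℝ) / (e : ℝ) =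
            -(((m' * r + (j' : ℕ) : ℤ)) : ℝ) / (e : ℝ) :=
          le_antisymm ((Real.rpow_le_rpow_left_iff hppos).1 heqv.le)
            ((Real.rpow_le_rpow_left_iff hppos).1 heqv.ge)
        have he0R : (e : ℝ) ≠ 0 := by positivity
        have hZR : (((m * r + (j : ℕ) : ℤ)) : ℝ) = (((m' * r + (j' : ℕ) : ℤ)) : ℝ) := by
          have h := congrArg (fun z : ℝ => z * (e : ℝ)) hexp
          simp only [div_mul_cancel₀ _ he0R] at h
          linarith
        have hZ : m * (r : ℤ) + ((j : ℕ) : ℤ) = m' * (r : ℤ) + ((j' : ℕ) : ℤ) := by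
          exact_mod_cast hZR
        rcases eq_or_ne m m' with rfl | hmne
        · apply hnejj
          have : ((j : ℕ) : ℤ) = ((j' : ℕ) : ℤ) := by linarith
          exact Fin.ext (by exact_mod_cast this)
        · have h1 : (m - m') * (r : ℤ) = ((j' : ℕ) : ℤ) - ((j : ℕ) : ℤ) := by
            linear_combination hZ
          have hrZ : (0 : ℤ) < (r : ℤ) := by exact_mod_cast hrpos
          have h2 : |m - m'| * (r : ℤ) = |((j' : ℕ) : ℤ) - ((j : ℕ) : ℤ)| := by
            rw [← h1, abs_mul, abs_of_nonneg hrZ.le]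
          have h3 : |((j' : ℕ) : ℤ) - ((j : ℕ) : ℤ)| < (r : ℤ) := by
            rw [abs_sub_lt_iff]
            have hj1 : ((j : ℕ) : ℤ) < (r : ℤ) := by exact_mod_cast j.2
            have hj2 : ((j' : ℕ) : ℤ) < (r : ℤ) := by exact_mod_cast j'.2
            omega
          have h4 : 1 ≤ |m - m'| := Int.one_le_abs (sub_ne_zero.2 hmne)
          nlinarith [h2, h3, h4, hrZ]
      -- find the dominating term
      have hi₀T : i₀.2 ∈ Tf := by
        refine Finset.mem_filter.2 ⟨Finset.mem_univ _, ?_⟩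
        intro hyj0
        have hGne : G i₀ ≠ 0 := hG0 i₀ hi₀
        have hGpos : 0 < Fabs p (G i₀) := Fabs_pos p hGne
        have hmax : Fabs p (y i₀.2) = max (Fabs p (G (0, i₀.2))) (Fabs p (G (1, i₀.2))) :=
          hy _ _ (hGK _) (hGK _)
        have hcase : i₀ = (0, i₀.2) ∨ i₀ = (1, i₀.2) := by
          rcases i₀ with ⟨i1, j⟩
          fin_cases i1
          · exact Or.inl rfl
          · exact Or.inr rfl
        have hle : Fabs p (G i₀) ≤ Fabs p (y i₀.2) := by
          rcases hcase with hcc | hcc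
          · rw [hmax, hcc]; exact le_max_left _ _
          · rw [hmax, hcc]; exact le_max_right _ _
        rw [hyj0, Fabs_zero] at hle
        linarith
      obtain ⟨jstar, hjstarT, hjstarmax⟩ :=
        Tf.exists_max_image (fun j => Fabs p (t j)) ⟨i₀.2, hi₀T⟩
      have hjstar_y : y jstar ≠ 0 := (Finset.mem_filter.1 hjstarT).2
      have htstar0 : 0 < Fabs p (t jstar) := by
        refine Fabs_pos p ?_
        simp only [htdef]
        exact mul_ne_zero hjstar_y (pow_ne_zero _ hπne)
      have hrest : Fabs p (∑ j ∈ Finset.univ.erase jstar, t j) < Fabs p (t jstar) := by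
        rcases (Tf.erase jstar).eq_empty_or_nonempty with hTe | hTne'
        · have hall : ∀ j ∈ Finset.univ.erase jstar, Fabs p (t j) ≤ 0 := by
            intro j hj
            have hyj0 : y j = 0 := by
              by_contra hyj
              have hmem : j ∈ Tf.erase jstar := Finset.mem_erase.2
                ⟨(Finset.mem_erase.1 hj).1, Finset.mem_filter.2 ⟨Finset.mem_univ _, hyj⟩⟩
              rw [hTe] at hmem
              exact absurd hmem (Finset.notMem_empty j)
            have : t j = 0 := by simp only [htdef]; rw [hyj0, zero_mul]
            rw [this, Fabs_zero]
          exact lt_of_le_of_lt (Fabs_sum_le p _ _ le_rfl hall) htstar0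
        · obtain ⟨j1, hj1T, hj1max⟩ :=
            (Tf.erase jstar).exists_max_image (fun j => Fabs p (t j)) hTne'
          have hj1Tf : j1 ∈ Tf := (Finset.mem_erase.1 hj1T).2
          have hj1ne : j1 ≠ jstar := (Finset.mem_erase.1 hj1T).1
          have hlt : Fabs p (t j1) < Fabs p (t jstar) :=
            lt_of_le_of_ne (hjstarmax j1 hj1Tf) (hinj j1 hj1Tf jstar hjstarT hj1ne)
          refine lt_of_le_of_lt (Fabs_sum_le p _ _ (Fabs_nonneg p (t j1)) ?_) hlt
          intro j hj
          by_cases hyj : y j = 0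
          · have : t j = 0 := by simp only [htdef]; rw [hyj, zero_mul]
            rw [this, Fabs_zero]
            exact Fabs_nonneg p _
          · exact hj1max j (Finset.mem_erase.2 ⟨(Finset.mem_erase.1 hj).1,
              Finset.mem_filter.2 ⟨Finset.mem_univ _, hyj⟩⟩)
      have hsum' : t jstar + ∑ j ∈ Finset.univ.erase jstar, t j = 0 := by
        rw [Finset.add_sum_erase _ t (Finset.mem_univ jstar)]
        exact hsumK
      have hcontr := Fabs_add_eq_left p hrest
      rw [hsum', Fabs_zero] at hcontr
      linarith
    -- cardinality contradiction
    have hcard := hli.cardinal_le_rank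
    have hmk : (Cardinal.mk (Fin 2 × Fin r)) = ((2 * r : ℕ) : Cardinal) := by
      simp
    have hrank_lt : Module.rank ↥K₀ ↥(IntermediateField.extendScalars hK₀K) < Cardinal.aleph0 := by
      by_contra hinf
      push_neg at hinf
      have h0 := Cardinal.toNat_apply_of_aleph0_le hinf
      have : r = 0 := by rw [hr, Module.finrank, h0]
      omega
    have hrank_eq : ((r : ℕ) : Cardinal) =
        Module.rank ↥K₀ ↥(IntermediateField.extendScalars hK₀K) := by
      rw [hr, Module.finrank]
      exact Cardinal.cast_toNat_of_lt_aleph0 hrank_lt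
    rw [hmk, ← hrank_eq, Nat.cast_le] at hcard
    omega
  -- Step 2: conclude
  obtain ⟨β, hβK, hβ1, hxlt⟩ := happrox
  set x : ↥K := α - β with hxdef
  have hσx : Fabs p (σ x) = Fabs p x := Fabs_algEquiv p σ x
  have hβQ : Fabs p (σ β - β ^ Q) < 1 := by
    have h := hβ β hβK (by rw [padicAbs_eq_Fabs]; exact hβ1)
    have hc : (σ β : AlgebraicClosure ℚ_[p]) - (β : AlgebraicClosure ℚ_[p]) ^ Q =
        ((σ β - β ^ Q : ↥K) : AlgebraicClosure ℚ_[p]) := by push_cast; ring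
    rwa [hc, padicAbs_eq_Fabs] at h
  have hdecomp : σ α - α ^ Q = (σ β - β ^ Q) +
      (σ x + -(∑ k ∈ Finset.range Q, β ^ k * x ^ (Q - k) * (Q.choose k : ↥K))) := by
    have hα : α = β + x := by rw [hxdef]; ring
    have hσα : σ α = σ β + σ x := by rw [hα, map_add]
    have hpow : α ^ Q = β ^ Q + ∑ k ∈ Finset.range Q, β ^ k * x ^ (Q - k) * (Q.choose k : ↥K) := by
      conv_lhs => rw [hα, add_pow]
      rw [Finset.sum_range_succ, Nat.sub_self, pow_zero, Nat.choose_self, Nat.cast_one,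
        mul_one, mul_one, add_comm]
    rw [hσα, hpow]
    ring
  have hsumle : Fabs p (∑ k ∈ Finset.range Q, β ^ k * x ^ (Q - k) * (Q.choose k : ↥K)) ≤
      Fabs p x := by
    refine Fabs_sum_le p _ _ (Fabs_nonneg p x) ?_
    intro k hk
    have hkQ : k < Q := Finset.mem_range.1 hk
    rw [Fabs_mul, Fabs_mul, Fabs_pow, Fabs_pow]
    have h1 : Fabs p β ^ k ≤ 1 := pow_le_one₀ (Fabs_nonneg p β) hβ1
    have h2 : Fabs p x ^ (Q - k) ≤ Fabs p x :=
      pow_le_of_le_one (Fabs_nonneg p x) hxlt.le (by omega)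
    have h3 : Fabs p ((Q.choose k : ℕ) : ↥K) ≤ 1 := Fabs_natCast_le_one p _
    calc Fabs p β ^ k * Fabs p x ^ (Q - k) * Fabs p ((Q.choose k : ℕ) : ↥K)
        ≤ 1 * Fabs p x * 1 := by
          refine mul_le_mul (mul_le_mul h1 h2 (pow_nonneg (Fabs_nonneg p x) _) zero_le_one)
            h3 (Fabs_nonneg p _) (by simpa using Fabs_nonneg p x)
      _ = Fabs p x := by ring
  have hzlt : Fabs p (σ α - α ^ Q) < 1 := by
    rw [hdecomp]
    refine lt_of_le_of_lt (Fabs_add_le p _ _) ?_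
    rw [max_lt_iff]
    refine ⟨hβQ, ?_⟩
    refine lt_of_le_of_lt (Fabs_add_le p _ _) ?_
    rw [max_lt_iff]
    constructor
    · rw [hσx]; exact hxlt
    · rw [Fabs_neg]
      exact lt_of_le_of_lt hsumle hxlt
  have hgoal : (σ α : AlgebraicClosure ℚ_[p]) - (α : AlgebraicClosure ℚ_[p]) ^ Q =
      ((σ α - α ^ Q : ↥K) : AlgebraicClosure ℚ_[p]) := by push_cast; ring
  rw [hgoal, padicAbs_eq_Fabs]
  by_cases hz0 : σ α - α ^ Q = 0
  · rw [hz0, Fabs_zero]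
    positivity
  · obtain ⟨m, hm⟩ := hKval _ hz0
    rw [hm]
    rw [hm] at hzlt
    have he0R : (0 : ℝ) < (e : ℝ) := by exact_mod_cast he0
    have hm1 : 1 ≤ m := by
      by_contra hmn
      push_neg at hmn
      have hmle : m ≤ 0 := by omega
      have hnn : (0 : ℝ) ≤ -(m : ℝ) / (e : ℝ) := by
        apply div_nonneg _ he0R.le
        have : (m : ℝ) ≤ 0 := by exact_mod_cast hmle
        linarith
      have hge1 : (1 : ℝ) ≤ (p : ℝ) ^ (-(m : ℝ) / (e : ℝ)) :=
        Real.one_le_rpow hppos.le hnn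
      linarith
    rw [Real.rpow_le_rpow_left_iff hppos]
    rw [div_le_div_iff_of_pos_right he0R]
    have : (1 : ℝ) ≤ (m : ℝ) := by exact_mod_cast hm1
    linarith
end

section
/- Let p be an odd prime and let V = {A ∈ M₂(𝔽_p) : tr(A) = 0} be the 𝔽_p-vector space of trace-zero 2×2 matrices over 𝔽_p. If U ⊆ V is an 𝔽_p-linear subspace such that S·A·S⁻¹ ∈ U for every A ∈ U and every S ∈ SL₂(𝔽_p), then U = {0} or U = V. -/
/-- Let `p` be an odd prime and let `V = {A ∈ M₂(𝔽_p) : tr(A) = 0}` be the `𝔽_p`-vector space of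
trace-zero `2×2` matrices over `𝔽_p`.  If `U ⊆ V` is an `𝔽_p`-linear subspace such that
`S·A·S⁻¹ ∈ U` for every `A ∈ U` and every `S ∈ SL₂(𝔽_p)`, then `U = {0}` or `U = V`. -/
theorem statement11 (p : ℕ) [Fact p.Prime] (hodd : p ≠ 2)
    (U : Submodule (ZMod p) (Matrix (Fin 2) (Fin 2) (ZMod p)))
    (hUV : U ≤ LinearMap.ker (Matrix.traceLinearMap (Fin 2) (ZMod p) (ZMod p)))
    (hinv : ∀ A ∈ U, ∀ S : Matrix.SpecialLinearGroup (Fin 2) (ZMod p),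
      (S : Matrix (Fin 2) (Fin 2) (ZMod p)) * A *
        ((S⁻¹ : Matrix.SpecialLinearGroup (Fin 2) (ZMod p)) : Matrix (Fin 2) (Fin 2) (ZMod p))
        ∈ U) :
    U = ⊥ ∨ U = LinearMap.ker (Matrix.traceLinearMap (Fin 2) (ZMod p) (ZMod p)) := by
  by_cases hU : U = ⊥
  · exact Or.inl hU
  right
  refine le_antisymm hUV ?_
  have htwo : (2 : ZMod p) ≠ 0 := by
    intro h
    have h2 : ((2 : ℕ) : ZMod p) = 0 := by exact_mod_cast h
    have hdvd : p ∣ 2 := (ZMod.natCast_eq_zero_iff 2 p).mp h2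
    exact hodd ((Nat.prime_dvd_prime_iff_eq (Fact.out) Nat.prime_two).mp hdvd)
  -- conjugation helper
  have conj : ∀ A ∈ U, ∀ S : Matrix (Fin 2) (Fin 2) (ZMod p), S.det = 1 →
      S * A * S.adjugate ∈ U := by
    intro A hA S hS
    have h := hinv A hA ⟨S, hS⟩
    exact h
  set E : Matrix (Fin 2) (Fin 2) (ZMod p) := !![0,1;0,0] with hEdef
  set F : Matrix (Fin 2) (Fin 2) (ZMod p) := !![0,0;1,0] with hFdef
  set H : Matrix (Fin 2) (Fin 2) (ZMod p) := !![1,0;0,-1] with hHdef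
  -- E ∈ U ↔ F ∈ U (conjugation by the Weyl element)
  have hFofE : E ∈ U → F ∈ U := by
    intro h
    have h2 := conj E h !![0,-1;1,0] (by simp [Matrix.det_fin_two_of])
    rw [Matrix.adjugate_fin_two_of] at h2
    have key : !![(0:ZMod p),-1;1,0] * E * !![0,-(-1);-1,0] = -F := by
      rw [hEdef, hFdef]
      ext i j
      fin_cases i <;> fin_cases j <;>
        simp [Matrix.mul_apply, Fin.sum_univ_two]
    rw [key] at h2
    exact neg_mem_iff.mp h2
  have hEofF : F ∈ U → E ∈ U := by
    intro h
    have h2 := conj F h !![0,-1;1,0] (by simp [Matrix.det_fin_two_of])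
    rw [Matrix.adjugate_fin_two_of] at h2
    have key : !![(0:ZMod p),-1;1,0] * F * !![0,-(-1);-1,0] = -E := by
      rw [hEdef, hFdef]
      ext i j
      fin_cases i <;> fin_cases j <;>
        simp [Matrix.mul_apply, Fin.sum_univ_two]
    rw [key] at h2
    exact neg_mem_iff.mp h2
  -- From F ∈ U (and hence E ∈ U), we get H ∈ U
  have hHofF : F ∈ U → H ∈ U := by
    intro h
    have hE : E ∈ U := hEofF h
    have h2 := conj F h !![1,1;0,1] (by simp [Matrix.det_fin_two_of])
    rw [Matrix.adjugate_fin_two_of] at h2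
    have key : !![(1:ZMod p),1;0,1] * F * !![1,-1;-0,1] = H - E + F := by
      rw [hEdef, hFdef, hHdef]
      ext i j
      fin_cases i <;> fin_cases j <;>
        simp [Matrix.mul_apply, Fin.sum_univ_two]
    rw [key] at h2
    have : H = (H - E + F) + E - F := by abel
    rw [this]
    exact U.sub_mem (U.add_mem h2 hE) h
  -- get a nonzero element of U
  obtain ⟨A, hA, hA0⟩ := Submodule.exists_mem_ne_zero_of_ne_bot hU
  have htr : A 1 1 = - A 0 0 := by
    have := hUV hA
    rw [LinearMap.mem_ker] at this
    have h2 : A.trace = 0 := this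
    rw [Matrix.trace_fin_two] at h2
    exact eq_neg_of_add_eq_zero_right h2
  -- Show F ∈ U by cases on the entries of A
  have hF : F ∈ U := by
    by_cases hb : A 0 1 ≠ 0
    · -- conjugate by lower unipotents to extract F
      have h1 := conj A hA !![1,0;1,1] (by simp [Matrix.det_fin_two_of])
      have h2 := conj A hA !![1,0;-1,1] (by simp [Matrix.det_fin_two_of])
      rw [Matrix.adjugate_fin_two_of] at h1 h2
      have hcomb : !![(1:ZMod p),0;1,1] * A * !![1,-0;-1,1]
          + !![(1:ZMod p),0;-1,1] * A * !![1,-0;-(-1),1] - (2 : ZMod p) • A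
          = (-(2 * A 0 1)) • F := by
        rw [hFdef]
        ext i j
        fin_cases i <;> fin_cases j <;>
          simp [Matrix.mul_apply, Matrix.vecMul, dotProduct, Matrix.vecHead, Matrix.vecTail, Fin.sum_univ_two, htr] <;> ring
      have hmem : (-(2 * A 0 1)) • F ∈ U := by
        rw [← hcomb]
        exact U.sub_mem (U.add_mem h1 h2) (U.smul_mem _ hA)
      have hne : (-(2 * A 0 1) : ZMod p) ≠ 0 := by
        simp only [ne_eq, neg_eq_zero, mul_eq_zero, not_or]
        exact ⟨htwo, hb⟩
      have := U.smul_mem (-(2 * A 0 1))⁻¹ hmem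
      rwa [inv_smul_smul₀ hne] at this
    · push_neg at hb
      by_cases hc : A 1 0 ≠ 0
      · -- conjugate by upper unipotents to extract E, then swap
        have h1 := conj A hA !![1,1;0,1] (by simp [Matrix.det_fin_two_of])
        have h2 := conj A hA !![1,-1;0,1] (by simp [Matrix.det_fin_two_of])
        rw [Matrix.adjugate_fin_two_of] at h1 h2
        have hcomb : !![(1:ZMod p),1;0,1] * A * !![1,-1;-0,1]
            + !![(1:ZMod p),-1;0,1] * A * !![1,-(-1);-0,1] - (2 : ZMod p) • A
            = (-(2 * A 1 0)) • E := by
          rw [hEdef]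
          ext i j
          fin_cases i <;> fin_cases j <;>
            simp [Matrix.mul_apply, Matrix.vecMul, dotProduct, Matrix.vecHead, Matrix.vecTail, Fin.sum_univ_two, htr] <;> ring
        have hmem : (-(2 * A 1 0)) • E ∈ U := by
          rw [← hcomb]
          exact U.sub_mem (U.add_mem h1 h2) (U.smul_mem _ hA)
        have hne : (-(2 * A 1 0) : ZMod p) ≠ 0 := by
          simp only [ne_eq, neg_eq_zero, mul_eq_zero, not_or]
          exact ⟨htwo, hc⟩
        have hEmem := U.smul_mem (-(2 * A 1 0))⁻¹ hmem
        rw [inv_smul_smul₀ hne] at hEmem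
        exact hFofE hEmem
      · push_neg at hc
        -- A is diagonal: A = a • H with a ≠ 0
        have ha : A 0 0 ≠ 0 := by
          intro ha
          apply hA0
          ext i j
          fin_cases i <;> fin_cases j <;>
            simp [ha, hb, hc, htr]
        have hAH : A = A 0 0 • H := by
          rw [hHdef]
          ext i j
          fin_cases i <;> fin_cases j <;> simp [htr, hb, hc]
        have hH : H ∈ U := by
          have hH2 : H = (A 0 0)⁻¹ • A := by
            rw [hHdef]
            ext i j
            fin_cases i <;> fin_cases j <;>
              simp [htr, hb, hc, inv_mul_cancel₀ ha, mul_neg]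
          rw [hH2]; exact U.smul_mem _ hA
        -- conjugate H by upper unipotent: T H T⁻¹ = H - 2E
        have h1 := conj H hH !![1,1;0,1] (by simp [Matrix.det_fin_two_of])
        rw [Matrix.adjugate_fin_two_of] at h1
        have key : !![(1:ZMod p),1;0,1] * H * !![1,-1;-0,1] - H = (-2 : ZMod p) • E := by
          rw [hEdef, hHdef]
          ext i j
          fin_cases i <;> fin_cases j <;>
            simp [Matrix.mul_apply, Fin.sum_univ_two] <;> ring
        have hmem : ((-2 : ZMod p)) • E ∈ U := by
          rw [← key]; exact U.sub_mem h1 hH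
        have hne : (-2 : ZMod p) ≠ 0 := by simpa using htwo
        have hEmem := U.smul_mem (-2 : ZMod p)⁻¹ hmem
        rw [inv_smul_smul₀ hne] at hEmem
        exact hFofE hEmem
  have hE : E ∈ U := hEofF hF
  have hH : H ∈ U := hHofF hF
  -- Now every trace-zero matrix is a combination of E, F, H
  intro B hB
  rw [LinearMap.mem_ker] at hB
  have hBtr : B 1 1 = - B 0 0 := by
    have h2 : B.trace = 0 := hB
    rw [Matrix.trace_fin_two] at h2
    exact eq_neg_of_add_eq_zero_right h2
  have hBeq : B = B 0 0 • H + B 0 1 • E + B 1 0 • F := by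
    rw [hEdef, hFdef, hHdef]
    ext i j
    fin_cases i <;> fin_cases j <;> simp [hBtr]
  rw [hBeq]
  exact U.add_mem (U.add_mem (U.smul_mem _ hH) (U.smul_mem _ hE)) (U.smul_mem _ hF)
end

section
/- Let p ≥ 5 be a prime, let G be a group, let φ : G → GL₂(𝔽_p) be a surjective group homomorphism, and let N be a normal subgroup of G such that the quotient group G/N has finite exponent coprime to p. Then the image φ(N) contains SL₂(𝔽_p). -/
open scoped MatrixGroups

/-- Let `p ≥ 5` be a prime, let `G` be a group, let `φ : G → GL₂(𝔽_p)` be a surjective group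
homomorphism, and let `N` be a normal subgroup of `G` such that the quotient group `G/N` has
finite exponent coprime to `p`.  Then the image `φ(N)` contains `SL₂(𝔽_p)`. -/
theorem statement13 (p : ℕ) [Fact p.Prime] (hp5 : 5 ≤ p) (G : Type*) [Group G]
    (φ : G →* GL (Fin 2) (ZMod p)) (hφ : Function.Surjective φ)
    (N : Subgroup G) [N.Normal]
    (hexp : Monoid.exponent (G ⧸ N) ≠ 0)
    (hcop : Nat.Coprime (Monoid.exponent (G ⧸ N)) p) :
    ∀ A : Matrix.SpecialLinearGroup (Fin 2) (ZMod p),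
      Matrix.SpecialLinearGroup.toGL A ∈ Subgroup.map φ N := by
  set e := Monoid.exponent (G ⧸ N) with he
  set H := Subgroup.map φ N with hH
  have hpow : ∀ g : GL (Fin 2) (ZMod p), g ^ e ∈ H := by
    intro g
    obtain ⟨x, rfl⟩ := hφ g
    have h1 : ((x : G ⧸ N)) ^ e = 1 := Monoid.pow_exponent_eq_one _
    have h2 : x ^ e ∈ N := by
      rwa [← QuotientGroup.eq_one_iff, QuotientGroup.mk_pow]
    exact ⟨x ^ e, h2, map_pow φ x e⟩
  have hep : (e : ZMod p) ≠ 0 := by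
    intro h
    rw [ZMod.natCast_eq_zero_iff] at h
    have := Nat.Coprime.eq_one_of_dvd hcop.symm h
    have hp2 := (Fact.out : p.Prime).two_le
    omega
  set T : ZMod p → Matrix.SpecialLinearGroup (Fin 2) (ZMod p) :=
    fun c => ⟨!![1, c; 0, 1], by simp [Matrix.det_fin_two_of]⟩ with hT
  set L : ZMod p → Matrix.SpecialLinearGroup (Fin 2) (ZMod p) :=
    fun c => ⟨!![1, 0; c, 1], by simp [Matrix.det_fin_two_of]⟩ with hL
  have Tmul : ∀ x y, T x * T y = T (x + y) := by
    intro x y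
    ext i j
    rw [Matrix.SpecialLinearGroup.coe_mul]
    fin_cases i <;> fin_cases j <;>
      simp [hT, Matrix.SpecialLinearGroup.coe_mul, Matrix.mul_fin_two, add_comm]
  have Lmul : ∀ x y, L x * L y = L (x + y) := by
    intro x y
    ext i j
    rw [Matrix.SpecialLinearGroup.coe_mul]
    fin_cases i <;> fin_cases j <;>
      simp [hL, Matrix.SpecialLinearGroup.coe_mul, Matrix.mul_fin_two, add_comm]
  have Tpow : ∀ (n : ℕ) (c : ZMod p), (T c) ^ n = T (n * c) := by
    intro n c
    induction n with
    | zero =>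
        rw [pow_zero]
        ext i j
        fin_cases i <;> fin_cases j <;> simp [hT, Matrix.one_apply]
    | succ n ih =>
        rw [pow_succ, ih, Tmul]
        congr 1
        push_cast
        ring
  have Lpow : ∀ (n : ℕ) (c : ZMod p), (L c) ^ n = L (n * c) := by
    intro n c
    induction n with
    | zero =>
        rw [pow_zero]
        ext i j
        fin_cases i <;> fin_cases j <;> simp [hL, Matrix.one_apply]
    | succ n ih =>
        rw [pow_succ, ih, Lmul]
        congr 1
        push_cast
        ring
  have TH : ∀ c, Matrix.SpecialLinearGroup.toGL (T c) ∈ H := by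
    intro c
    have : T c = (T ((e : ZMod p)⁻¹ * c)) ^ e := by
      rw [Tpow, ← mul_assoc, mul_inv_cancel₀ hep, one_mul]
    rw [this, map_pow]
    exact hpow _
  have LH : ∀ c, Matrix.SpecialLinearGroup.toGL (L c) ∈ H := by
    intro c
    have : L c = (L ((e : ZMod p)⁻¹ * c)) ^ e := by
      rw [Lpow, ← mul_assoc, mul_inv_cancel₀ hep, one_mul]
    rw [this, map_pow]
    exact hpow _
  have key : ∀ A : Matrix.SpecialLinearGroup (Fin 2) (ZMod p), A.1 1 0 ≠ 0 →
      Matrix.SpecialLinearGroup.toGL A ∈ H := by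
    intro A hc
    have hdet : A.1 0 0 * A.1 1 1 - A.1 0 1 * A.1 1 0 = 1 := by
      have := A.2
      rw [Matrix.det_fin_two] at this
      exact this
    have hA : A = T ((A.1 0 0 - 1) * (A.1 1 0)⁻¹) * L (A.1 1 0) *
        T ((A.1 1 1 - 1) * (A.1 1 0)⁻¹) := by
      ext i j
      rw [Matrix.SpecialLinearGroup.coe_mul, Matrix.SpecialLinearGroup.coe_mul]
      show A.1 i j = _
      conv_lhs => rw [Matrix.eta_fin_two A.1]
      simp only [hT, hL, Matrix.mul_fin_two]
      fin_cases i <;> fin_cases j <;>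
        simp only [Matrix.cons_val', Matrix.cons_val_zero, Matrix.cons_val_one,
          Matrix.head_cons, Matrix.head_fin_const, Matrix.empty_val',
          Matrix.cons_val_fin_one, Matrix.of_apply, Fin.zero_eta, Fin.mk_one] <;>
        field_simp <;>
        grind
    rw [hA, map_mul, map_mul]
    exact H.mul_mem (H.mul_mem (TH _) (LH _)) (TH _)
  intro A
  by_cases hc : A.1 1 0 ≠ 0
  · exact key A hc
  · push_neg at hc
    have hdet : A.1 0 0 * A.1 1 1 - A.1 0 1 * A.1 1 0 = 1 := by
      have := A.2
      rw [Matrix.det_fin_two] at this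
      exact this
    have ha : A.1 0 0 ≠ 0 := by
      intro h
      rw [h, hc] at hdet
      simp at hdet
    have hB : (L 1 * A).1 1 0 ≠ 0 := by
      have h10 : (L 1 * A).1 1 0 = A.1 0 0 + A.1 1 0 := by
        rw [Matrix.SpecialLinearGroup.coe_mul, Matrix.mul_apply, Fin.sum_univ_two]
        simp [hL]
      rw [h10, hc, add_zero]
      exact ha
    have hmem := H.mul_mem (H.inv_mem (LH 1)) (key (L 1 * A) hB)
    rw [map_mul, inv_mul_cancel_left] at hmem
    exact hmem
end
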